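/- arXiv:1102.5067 — 10 statements merged into one kernel-verified Lean document; each statement's English description precedes it below -/
import Mathlib

section
/- Let h be the flow of σ as in the context. For each fixed y ∈ ℝ, the function F(x) = exp(−∫₀^y σ'(h(x,s)) ds) is differentiable in x, and |F'(x)| ≤ M₃ |y| exp(2 M₂ |y|) for all x ∈ ℝ. -/
/-- For fixed `y`, the map `x ↦ exp(−∫₀^y σ'(h(x,s)) ds)` is differentiable and its
derivative is bounded by `M₃ |y| exp(2 M₂ |y|)`. -/
theorem flow_inv_deriv_x_bound
    (σ : ℝ → ℝ) (h : ℝ → ℝ → ℝ) (M₂ M₃ M₅ : ℝ)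
    (hM₂ : 0 < M₂) (hM₃ : 0 < M₃) (hM₅ : 0 < M₅)
    (hσ : ContDiff ℝ 2 σ)
    (hσb : ∀ x, |σ x| ≤ M₅)
    (hσ'b : ∀ x, |deriv σ x| ≤ M₂)
    (hσ''b : ∀ x, |deriv (deriv σ) x| ≤ M₃)
    (hh0 : ∀ x, h x 0 = x)
    (hhy : ∀ x y, HasDerivAt (fun y => h x y) (σ (h x y)) y)
    (hhx : ∀ x y, HasDerivAt (fun x => h x y)
      (Real.exp (∫ s in (0:ℝ)..y, deriv σ (h x s))) x) :
    ∀ y : ℝ,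
      Differentiable ℝ (fun x => Real.exp (-∫ s in (0:ℝ)..y, deriv σ (h x s))) ∧
      ∀ x : ℝ,
        |deriv (fun x => Real.exp (-∫ s in (0:ℝ)..y, deriv σ (h x s))) x| ≤
          M₃ * |y| * Real.exp (2 * M₂ * |y|) := by
  intro y
  -- basic continuity facts
  have hσ1 : ContDiff ℝ 1 (deriv σ) := by
    have h2 : ContDiff ℝ (1 + 1) σ := by
      have : ((1 + 1 : ℕ) : WithTop ℕ∞) = 2 := by norm_num
      rw [show ((1:WithTop ℕ∞) + 1) = 2 from by norm_num]
      exact hσ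
    exact (contDiff_succ_iff_deriv.mp h2).2.2
  have hσ'cont : Continuous (deriv σ) := hσ1.continuous
  have hσ''diff : Differentiable ℝ (deriv σ) := hσ1.differentiable one_ne_zero
  have hhcont : ∀ x, Continuous (fun s => h x s) := fun x =>
    continuous_iff_continuousAt.mpr fun s => (hhy x s).continuousAt
  have hFcont : ∀ x, Continuous (fun s => deriv σ (h x s)) := fun x =>
    hσ'cont.comp (hhcont x)
  -- bound on inner integrals
  have hIb : ∀ x t, |∫ r in (0:ℝ)..t, deriv σ (h x r)| ≤ M₂ * |t| := by
    intro x t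
    have := intervalIntegral.norm_integral_le_of_norm_le_const
      (C := M₂) (f := fun r => deriv σ (h x r)) (a := 0) (b := t)
      (fun r _ => hσ'b (h x r))
    simpa using this
  have habs : ∀ t, t ∈ Set.uIoc (0:ℝ) y → |t| ≤ |y| := by
    intro t ht
    have h1 := ht.1
    have h2 := ht.2
    rcases le_total 0 y with hy | hy
    · rw [Set.uIoc_of_le hy] at ht
      rw [abs_of_pos ht.1, abs_of_nonneg hy]; exact ht.2
    · rw [Set.uIoc_of_ge hy] at ht
      rw [abs_of_nonpos ht.2, abs_of_nonpos hy]; linarith [ht.1]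
  -- derivative of the integral
  set F' : ℝ → ℝ → ℝ := fun x t =>
    deriv (deriv σ) (h x t) * Real.exp (∫ r in (0:ℝ)..t, deriv σ (h x r)) with hF'
  have key : ∀ x₀ : ℝ, HasDerivAt (fun x => ∫ s in (0:ℝ)..y, deriv σ (h x s))
      (∫ t in (0:ℝ)..y, F' x₀ t) x₀ := by
    intro x₀
    have hmeas : ∀ᶠ x in nhds x₀,
        MeasureTheory.AEStronglyMeasurable (fun s => deriv σ (h x s))
          (MeasureTheory.volume.restrict (Set.uIoc (0:ℝ) y)) :=
      Filter.Eventually.of_forall fun x => ((hFcont x).aestronglyMeasurable).restrict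
    have hint : IntervalIntegrable (fun s => deriv σ (h x₀ s)) MeasureTheory.volume 0 y :=
      (hFcont x₀).intervalIntegrable 0 y
    have hF'cont : Continuous (F' x₀) := by
      apply Continuous.mul
      · exact (hσ1.continuous_deriv le_rfl).comp (hhcont x₀)
      · exact Real.continuous_exp.comp
          (intervalIntegral.continuous_primitive (fun a b => (hFcont x₀).intervalIntegrable a b) 0)
    have hF'meas : MeasureTheory.AEStronglyMeasurable (F' x₀)
        (MeasureTheory.volume.restrict (Set.uIoc (0:ℝ) y)) :=
      hF'cont.aestronglyMeasurable.restrict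
    have hbound : ∀ᵐ t ∂(MeasureTheory.volume), t ∈ Set.uIoc (0:ℝ) y →
        ∀ x ∈ Metric.ball x₀ 1, ‖F' x t‖ ≤ M₃ * Real.exp (M₂ * |y|) := by
      refine Filter.Eventually.of_forall fun t ht x _ => ?_
      have h1 : |deriv (deriv σ) (h x t)| ≤ M₃ := hσ''b _
      have h2 : Real.exp (∫ r in (0:ℝ)..t, deriv σ (h x r)) ≤ Real.exp (M₂ * |y|) := by
        apply Real.exp_le_exp.mpr
        calc (∫ r in (0:ℝ)..t, deriv σ (h x r)) ≤ |∫ r in (0:ℝ)..t, deriv σ (h x r)| :=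
              le_abs_self _
          _ ≤ M₂ * |t| := hIb x t
          _ ≤ M₂ * |y| := by nlinarith [habs t ht, abs_nonneg t]
      rw [Real.norm_eq_abs, hF', abs_mul, abs_of_pos (Real.exp_pos _)]
      exact mul_le_mul h1 h2 (Real.exp_pos _).le hM₃.le
    have hdiff : ∀ᵐ t ∂(MeasureTheory.volume), t ∈ Set.uIoc (0:ℝ) y →
        ∀ x ∈ Metric.ball x₀ 1, HasDerivAt (fun x => deriv σ (h x t)) (F' x t) x := by
      refine Filter.Eventually.of_forall fun t _ x _ => ?_
      exact ((hσ''diff (h x t)).hasDerivAt).comp x (hhx x t)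
    exact (intervalIntegral.hasDerivAt_integral_of_dominated_loc_of_deriv_le
      (Metric.ball_mem_nhds x₀ one_pos) hmeas hint hF'meas hbound (intervalIntegrable_const) hdiff).2
  -- main derivative
  have main : ∀ x₀ : ℝ, HasDerivAt (fun x => Real.exp (-∫ s in (0:ℝ)..y, deriv σ (h x s)))
      (Real.exp (-∫ s in (0:ℝ)..y, deriv σ (h x₀ s)) *
        -(∫ t in (0:ℝ)..y, F' x₀ t)) x₀ := by
    intro x₀
    exact ((key x₀).neg).exp
  constructor
  · exact fun x => (main x).differentiableAt
  · intro x
    rw [(main x).deriv]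
    have b1 : |∫ t in (0:ℝ)..y, F' x t| ≤ M₃ * Real.exp (M₂ * |y|) * |y| := by
      have := intervalIntegral.norm_integral_le_of_norm_le_const
        (C := M₃ * Real.exp (M₂ * |y|)) (f := F' x) (a := 0) (b := y) ?_
      · simpa using this
      · intro t ht
        have h2 : Real.exp (∫ r in (0:ℝ)..t, deriv σ (h x r)) ≤ Real.exp (M₂ * |y|) := by
          apply Real.exp_le_exp.mpr
          calc (∫ r in (0:ℝ)..t, deriv σ (h x r)) ≤ |∫ r in (0:ℝ)..t, deriv σ (h x r)| :=
                le_abs_self _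
            _ ≤ M₂ * |t| := hIb x t
            _ ≤ M₂ * |y| := by nlinarith [habs t ht, abs_nonneg t]
        rw [Real.norm_eq_abs, hF', abs_mul, abs_of_pos (Real.exp_pos _)]
        exact mul_le_mul (hσ''b _) h2 (Real.exp_pos _).le hM₃.le
    have b2 : Real.exp (-∫ s in (0:ℝ)..y, deriv σ (h x s)) ≤ Real.exp (M₂ * |y|) := by
      apply Real.exp_le_exp.mpr
      have := hIb x y
      rw [abs_le] at this
      linarith [this.1]
    rw [abs_mul, abs_neg, abs_of_pos (Real.exp_pos _), mul_comm]
    calc |∫ t in (0:ℝ)..y, F' x t| * Real.exp (-∫ s in (0:ℝ)..y, deriv σ (h x s))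
        ≤ (M₃ * Real.exp (M₂ * |y|) * |y|) * Real.exp (M₂ * |y|) :=
          mul_le_mul b1 b2 (Real.exp_pos _).le (by positivity)
      _ = M₃ * |y| * Real.exp (2 * M₂ * |y|) := by
          rw [show (2:ℝ) * M₂ * |y| = M₂ * |y| + M₂ * |y| by ring, Real.exp_add]; ring
end

section
/- Let h be the flow of σ as in the context. Then for all x₁, x₂, y ∈ ℝ, |exp(−∫₀^y σ'(h(x₁,s)) ds) − exp(−∫₀^y σ'(h(x₂,s)) ds)| ≤ M₃ |y| exp(2 M₂ |y|) |x₁ − x₂|. -/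
lemma exp_lip_aux {c u v : ℝ} (hu : u ≤ c) (hv : v ≤ c) :
    |Real.exp u - Real.exp v| ≤ Real.exp c * |u - v| := by
  have := Convex.norm_image_sub_le_of_norm_hasDerivWithin_le
    (f := Real.exp) (f' := Real.exp) (s := Set.Iic c)
    (fun x _ => (Real.hasDerivAt_exp x).hasDerivWithinAt)
    (fun x hx => by
      rw [Real.norm_eq_abs, abs_of_pos (Real.exp_pos x)]
      exact Real.exp_le_exp.2 hx)
    (convex_Iic c) hv hu
  simpa [Real.norm_eq_abs] using this

/-- Lipschitz estimate in `x` of the reciprocal of the `x`-derivative of the flow: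
`|exp(−∫₀^y σ'(h(x₁,s))ds) − exp(−∫₀^y σ'(h(x₂,s))ds)| ≤ M₃|y| exp(2M₂|y|)|x₁ − x₂|`. -/
theorem flow_inv_lipschitz_x
    (σ : ℝ → ℝ) (h : ℝ → ℝ → ℝ) (M₂ M₃ M₅ : ℝ)
    (hM₂ : 0 < M₂) (hM₃ : 0 < M₃) (hM₅ : 0 < M₅)
    (hσ : ContDiff ℝ 2 σ)
    (hσb : ∀ x, |σ x| ≤ M₅)
    (hσ'b : ∀ x, |deriv σ x| ≤ M₂)
    (hσ''b : ∀ x, |deriv (deriv σ) x| ≤ M₃)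
    (hh0 : ∀ x, h x 0 = x)
    (hhy : ∀ x y, HasDerivAt (fun y => h x y) (σ (h x y)) y)
    (hhx : ∀ x y, HasDerivAt (fun x => h x y)
      (Real.exp (∫ s in (0:ℝ)..y, deriv σ (h x s))) x) :
    ∀ x₁ x₂ y : ℝ,
      |Real.exp (-∫ s in (0:ℝ)..y, deriv σ (h x₁ s)) -
        Real.exp (-∫ s in (0:ℝ)..y, deriv σ (h x₂ s))| ≤
        M₃ * |y| * Real.exp (2 * M₂ * |y|) * |x₁ - x₂| := by
  intro x₁ x₂ y
  -- continuity of integrand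
  have hσ'c : Continuous (deriv σ) := hσ.continuous_deriv one_le_two
  have hσ'diff : Differentiable ℝ (deriv σ) := by
    have := (contDiff_succ_iff_deriv (n := 1)).mp (by exact_mod_cast hσ)
    exact this.2.2.differentiable one_ne_zero
  have hcont : ∀ x, Continuous (fun s => deriv σ (h x s)) := fun x =>
    hσ'c.comp (continuous_iff_continuousAt.2 fun s => (hhy x s).continuousAt)
  -- bound of integrals
  have hIb : ∀ x z : ℝ, |∫ s in (0:ℝ)..z, deriv σ (h x s)| ≤ M₂ * |z| := by
    intro x z
    have := intervalIntegral.norm_integral_le_of_norm_le_const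
      (C := M₂) (f := fun s => deriv σ (h x s)) (a := (0:ℝ)) (b := z)
      (fun s _ => by simpa [Real.norm_eq_abs] using hσ'b (h x s))
    simpa [Real.norm_eq_abs] using this
  -- Lipschitz of flow in x
  have hL : ∀ s : ℝ, |h x₁ s - h x₂ s| ≤ Real.exp (M₂ * |s|) * |x₁ - x₂| := by
    intro s
    have := Convex.norm_image_sub_le_of_norm_hasDerivWithin_le
      (f := fun x => h x s)
      (f' := fun x => Real.exp (∫ u in (0:ℝ)..s, deriv σ (h x u)))
      (s := Set.univ)
      (fun x _ => (hhx x s).hasDerivWithinAt)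
      (fun x _ => by
        rw [Real.norm_eq_abs, abs_of_pos (Real.exp_pos _)]
        exact Real.exp_le_exp.2 ((le_abs_self _).trans (hIb x s)))
      convex_univ (Set.mem_univ x₂) (Set.mem_univ x₁)
    simpa [Real.norm_eq_abs] using this
  -- Lipschitz of deriv σ
  have hσ'lip : ∀ a b : ℝ, |deriv σ a - deriv σ b| ≤ M₃ * |a - b| := by
    intro a b
    have := Convex.norm_image_sub_le_of_norm_hasDerivWithin_le
      (f := deriv σ) (f' := deriv (deriv σ)) (s := Set.univ)
      (fun x _ => (hσ'diff x).hasDerivAt.hasDerivWithinAt)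
      (fun x _ => by simpa [Real.norm_eq_abs] using hσ''b x)
      convex_univ (Set.mem_univ b) (Set.mem_univ a)
    simpa [Real.norm_eq_abs] using this
  set a := ∫ s in (0:ℝ)..y, deriv σ (h x₁ s) with ha
  set b := ∫ s in (0:ℝ)..y, deriv σ (h x₂ s) with hb
  -- bound |a - b|
  have hiint : ∀ x, IntervalIntegrable (fun s => deriv σ (h x s))
      MeasureTheory.volume 0 y := fun x => (hcont x).intervalIntegrable 0 y
  have hsub : a - b = ∫ s in (0:ℝ)..y, (deriv σ (h x₁ s) - deriv σ (h x₂ s)) :=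
    (intervalIntegral.integral_sub (hiint x₁) (hiint x₂)).symm
  have habs : ∀ s ∈ Set.uIoc (0:ℝ) y, |s| ≤ |y| := by
    intro s hs
    have h1 := hs.1
    have h2 := hs.2
    rcases le_total 0 y with hy | hy
    · rw [min_eq_left hy] at h1; rw [max_eq_right hy] at h2
      rw [abs_of_pos (by linarith), abs_of_nonneg hy]; linarith
    · rw [min_eq_right hy] at h1; rw [max_eq_left hy] at h2
      rw [abs_of_nonpos (by linarith), abs_of_nonpos hy]; linarith
  have hab : |a - b| ≤ M₃ * Real.exp (M₂ * |y|) * |x₁ - x₂| * |y| := by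
    rw [hsub]
    have := intervalIntegral.norm_integral_le_of_norm_le_const
      (C := M₃ * Real.exp (M₂ * |y|) * |x₁ - x₂|)
      (f := fun s => deriv σ (h x₁ s) - deriv σ (h x₂ s)) (a := (0:ℝ)) (b := y)
      (fun s hs => by
        rw [Real.norm_eq_abs]
        calc |deriv σ (h x₁ s) - deriv σ (h x₂ s)| ≤ M₃ * |h x₁ s - h x₂ s| :=
              hσ'lip _ _
          _ ≤ M₃ * (Real.exp (M₂ * |s|) * |x₁ - x₂|) := by
              exact mul_le_mul_of_nonneg_left (hL s) hM₃.le
          _ ≤ M₃ * (Real.exp (M₂ * |y|) * |x₁ - x₂|) := by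
              have : Real.exp (M₂ * |s|) ≤ Real.exp (M₂ * |y|) :=
                Real.exp_le_exp.2 (mul_le_mul_of_nonneg_left (habs s hs) hM₂.le)
              have h0 : (0:ℝ) ≤ |x₁ - x₂| := abs_nonneg _
              gcongr
          _ = M₃ * Real.exp (M₂ * |y|) * |x₁ - x₂| := by ring)
    simpa [Real.norm_eq_abs] using this
  -- exp Lipschitz step
  have hstep : |Real.exp (-a) - Real.exp (-b)| ≤ Real.exp (M₂ * |y|) * |a - b| := by
    have h1 : -a ≤ M₂ * |y| := (neg_le_abs a).trans (hIb x₁ y)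
    have h2 : -b ≤ M₂ * |y| := (neg_le_abs b).trans (hIb x₂ y)
    have := exp_lip_aux h1 h2
    rw [show |a - b| = |-a - -b| by rw [neg_sub_neg, abs_sub_comm]]
    exact this
  calc |Real.exp (-a) - Real.exp (-b)| ≤ Real.exp (M₂ * |y|) * |a - b| := hstep
    _ ≤ Real.exp (M₂ * |y|) * (M₃ * Real.exp (M₂ * |y|) * |x₁ - x₂| * |y|) :=
        mul_le_mul_of_nonneg_left hab (Real.exp_pos _).le
    _ = M₃ * |y| * Real.exp (2 * M₂ * |y|) * |x₁ - x₂| := by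
        rw [show 2 * M₂ * |y| = M₂ * |y| + M₂ * |y| by ring, Real.exp_add]; ring
end

section
/- Let h be the flow of σ and b as in the context. Then for all x₁, x₂, y ∈ ℝ, |exp(−∫₀^y σ'(h(x₁,s)) ds) · b(h(x₁,y)) − exp(−∫₀^y σ'(h(x₂,s)) ds) · b(h(x₂,y))| ≤ exp(2 M₂ |y|) (M₁ M₃ |y| + M₄) |x₁ − x₂|. -/
lemma lip_of_deriv_bound {f f' : ℝ → ℝ} {C : ℝ} (hf : ∀ x, HasDerivAt f (f' x) x)
    (hbd : ∀ x, |f' x| ≤ C) (u v : ℝ) : |f u - f v| ≤ C * |u - v| := by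
  simpa [Real.norm_eq_abs] using
    Convex.norm_image_sub_le_of_norm_hasDerivWithin_le (s := Set.univ)
      (fun x _ => (hf x).hasDerivWithinAt) (fun x _ => hbd x) convex_univ
      (Set.mem_univ v) (Set.mem_univ u)

lemma exp_lip {a b c : ℝ} (ha : a ≤ c) (hb : b ≤ c) :
    |Real.exp a - Real.exp b| ≤ Real.exp c * |a - b| := by
  rcases le_total a b with hab | hab
  · rw [abs_sub_comm, abs_of_nonneg (sub_nonneg.mpr (Real.exp_le_exp.mpr hab)),
      abs_sub_comm, abs_of_nonneg (sub_nonneg.mpr hab)]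
    have h1 : Real.exp a = Real.exp b * Real.exp (a - b) := by
      rw [← Real.exp_add]; ring_nf
    have h2 : (a - b) + 1 ≤ Real.exp (a - b) := Real.add_one_le_exp _
    have h3 : Real.exp b ≤ Real.exp c := Real.exp_le_exp.mpr hb
    nlinarith [Real.exp_pos b, Real.exp_pos c]
  · rw [abs_of_nonneg (sub_nonneg.mpr (Real.exp_le_exp.mpr hab)),
      abs_of_nonneg (sub_nonneg.mpr hab)]
    have h1 : Real.exp b = Real.exp a * Real.exp (b - a) := by
      rw [← Real.exp_add]; ring_nf
    have h2 : (b - a) + 1 ≤ Real.exp (b - a) := Real.add_one_le_exp _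
    have h3 : Real.exp a ≤ Real.exp c := Real.exp_le_exp.mpr ha
    nlinarith [Real.exp_pos a, Real.exp_pos c]

/-- Lipschitz estimate in `x` of `(∂h/∂x)⁻¹ · b∘h`:
`|exp(−∫₀^y σ'(h(x₁,s))ds) b(h(x₁,y)) − exp(−∫₀^y σ'(h(x₂,s))ds) b(h(x₂,y))|
  ≤ exp(2M₂|y|)(M₁M₃|y| + M₄)|x₁ − x₂|`. -/
theorem doss_field_lipschitz_x
    (σ b : ℝ → ℝ) (h : ℝ → ℝ → ℝ) (M₁ M₂ M₃ M₄ M₅ : ℝ)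
    (hM₁ : 0 < M₁) (hM₂ : 0 < M₂) (hM₃ : 0 < M₃) (hM₄ : 0 < M₄) (hM₅ : 0 < M₅)
    (hσ : ContDiff ℝ 2 σ)
    (hσb : ∀ x, |σ x| ≤ M₅)
    (hσ'b : ∀ x, |deriv σ x| ≤ M₂)
    (hσ''b : ∀ x, |deriv (deriv σ) x| ≤ M₃)
    (hb : ContDiff ℝ 1 b)
    (hbb : ∀ x, |b x| ≤ M₁)
    (hb'b : ∀ x, |deriv b x| ≤ M₄)
    (hh0 : ∀ x, h x 0 = x)
    (hhy : ∀ x y, HasDerivAt (fun y => h x y) (σ (h x y)) y)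
    (hhx : ∀ x y, HasDerivAt (fun x => h x y)
      (Real.exp (∫ s in (0:ℝ)..y, deriv σ (h x s))) x) :
    ∀ x₁ x₂ y : ℝ,
      |Real.exp (-∫ s in (0:ℝ)..y, deriv σ (h x₁ s)) * b (h x₁ y) -
        Real.exp (-∫ s in (0:ℝ)..y, deriv σ (h x₂ s)) * b (h x₂ y)| ≤
        Real.exp (2 * M₂ * |y|) * (M₁ * M₃ * |y| + M₄) * |x₁ - x₂| := by
  intro x₁ x₂ y
  -- basic regularity
  have hσ'1 : ContDiff ℝ 1 (deriv σ) := by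
    have h2 : ContDiff ℝ ((1 : ℕ) + 1) σ := by exact_mod_cast hσ
    have h3 := (contDiff_succ_iff_deriv (n := 1)).mp (by exact_mod_cast h2)
    exact_mod_cast h3.2.2
  have hσ'c : Continuous (deriv σ) := hσ'1.continuous
  have hσ'd : ∀ x, HasDerivAt (deriv σ) (deriv (deriv σ) x) x := fun x =>
    ((hσ'1.differentiable one_ne_zero) x).hasDerivAt
  have hbd : ∀ x, HasDerivAt b (deriv b x) x := fun x =>
    ((hb.differentiable one_ne_zero) x).hasDerivAt
  have hhc : ∀ x, Continuous (fun s => h x s) := by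
    intro x
    have hd : Differentiable ℝ (fun s => h x s) := fun s => (hhy x s).differentiableAt
    exact hd.continuous
  -- bound on the integral of σ' along the flow
  have hI : ∀ x y' : ℝ, |∫ s in (0:ℝ)..y', deriv σ (h x s)| ≤ M₂ * |y'| := by
    intro x y'
    have := intervalIntegral.norm_integral_le_of_norm_le_const
      (C := M₂) (a := (0:ℝ)) (b := y') (f := fun s => deriv σ (h x s))
      (fun s _ => hσ'b (h x s))
    simpa [Real.norm_eq_abs] using this
  -- Lipschitz in x of the flow
  have hlipx : ∀ y' u v : ℝ, |h u y' - h v y'| ≤ Real.exp (M₂ * |y'|) * |u - v| := by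
    intro y' u v
    refine lip_of_deriv_bound (fun x => hhx x y') (fun x => ?_) u v
    rw [abs_of_pos (Real.exp_pos _)]
    exact Real.exp_le_exp.mpr ((le_abs_self _).trans (hI x y'))
  -- σ' is M₃-Lipschitz
  have hσ'lip : ∀ u v : ℝ, |deriv σ u - deriv σ v| ≤ M₃ * |u - v| :=
    lip_of_deriv_bound hσ'd hσ''b
  -- b is M₄-Lipschitz
  have hblip : ∀ u v : ℝ, |b u - b v| ≤ M₄ * |u - v| :=
    lip_of_deriv_bound hbd hb'b
  set I₁ := ∫ s in (0:ℝ)..y, deriv σ (h x₁ s) with hI₁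
  set I₂ := ∫ s in (0:ℝ)..y, deriv σ (h x₂ s) with hI₂
  -- difference of the integrals
  have hIdiff : |I₁ - I₂| ≤ M₃ * Real.exp (M₂ * |y|) * |x₁ - x₂| * |y| := by
    have hint : ∀ x, IntervalIntegrable (fun s => deriv σ (h x s))
        MeasureTheory.volume 0 y := fun x =>
      (hσ'c.comp (hhc x)).intervalIntegrable 0 y
    rw [hI₁, hI₂, ← intervalIntegral.integral_sub (hint x₁) (hint x₂)]
    have := intervalIntegral.norm_integral_le_of_norm_le_const
      (C := M₃ * Real.exp (M₂ * |y|) * |x₁ - x₂|) (a := (0:ℝ)) (b := y)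
      (f := fun s => deriv σ (h x₁ s) - deriv σ (h x₂ s)) ?_
    · simpa [Real.norm_eq_abs] using this
    · intro s hs
      have hsy : |s| ≤ |y| := by
        rcases Set.mem_uIoc.mp hs with ⟨h1, h2⟩ | ⟨h1, h2⟩ <;> rw [abs_le] <;>
          constructor <;> [skip; skip; skip; skip] <;>
          nlinarith [le_abs_self y, neg_abs_le y]
      calc |deriv σ (h x₁ s) - deriv σ (h x₂ s)| ≤ M₃ * |h x₁ s - h x₂ s| :=
            hσ'lip _ _
        _ ≤ M₃ * (Real.exp (M₂ * |s|) * |x₁ - x₂|) := by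
            exact mul_le_mul_of_nonneg_left (hlipx s x₁ x₂) hM₃.le
        _ ≤ M₃ * (Real.exp (M₂ * |y|) * |x₁ - x₂|) := by
            gcongr <;> nlinarith
        _ = M₃ * Real.exp (M₂ * |y|) * |x₁ - x₂| := by ring
  -- assemble
  have hE : Real.exp (2 * M₂ * |y|) = Real.exp (M₂ * |y|) * Real.exp (M₂ * |y|) := by
    rw [← Real.exp_add]; ring_nf
  have key : Real.exp (-I₁) * b (h x₁ y) - Real.exp (-I₂) * b (h x₂ y)
      = Real.exp (-I₁) * (b (h x₁ y) - b (h x₂ y))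
        + (Real.exp (-I₁) - Real.exp (-I₂)) * b (h x₂ y) := by ring
  rw [key]
  have hA1 : Real.exp (-I₁) ≤ Real.exp (M₂ * |y|) :=
    Real.exp_le_exp.mpr (neg_le.mp (abs_le.mp (hI x₁ y)).1)
  have t1 : |Real.exp (-I₁) * (b (h x₁ y) - b (h x₂ y))|
      ≤ Real.exp (M₂ * |y|) * (M₄ * (Real.exp (M₂ * |y|) * |x₁ - x₂|)) := by
    rw [abs_mul, abs_of_pos (Real.exp_pos _)]
    have h1 : |b (h x₁ y) - b (h x₂ y)| ≤ M₄ * (Real.exp (M₂ * |y|) * |x₁ - x₂|) :=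
      (hblip _ _).trans (mul_le_mul_of_nonneg_left (hlipx y x₁ x₂) hM₄.le)
    exact mul_le_mul hA1 h1 (abs_nonneg _) (Real.exp_pos _).le
  have t2 : |(Real.exp (-I₁) - Real.exp (-I₂)) * b (h x₂ y)|
      ≤ Real.exp (M₂ * |y|) * (M₃ * Real.exp (M₂ * |y|) * |x₁ - x₂| * |y|) * M₁ := by
    rw [abs_mul]
    have h1 : |Real.exp (-I₁) - Real.exp (-I₂)|
        ≤ Real.exp (M₂ * |y|) * |(-I₁) - (-I₂)| := by
      refine exp_lip ?_ ?_
      · exact neg_le.mp (abs_le.mp (hI x₁ y)).1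
      · exact neg_le.mp (abs_le.mp (hI x₂ y)).1
    have h2 : |(-I₁) - (-I₂)| = |I₁ - I₂| := by rw [abs_sub_comm]; ring_nf
    rw [h2] at h1
    calc |Real.exp (-I₁) - Real.exp (-I₂)| * |b (h x₂ y)|
        ≤ (Real.exp (M₂ * |y|) * (M₃ * Real.exp (M₂ * |y|) * |x₁ - x₂| * |y|)) * M₁ := by
          refine mul_le_mul (h1.trans ?_) (hbb _) (abs_nonneg _) ?_
          · exact mul_le_mul_of_nonneg_left hIdiff (Real.exp_pos _).le
          · positivity
      _ = Real.exp (M₂ * |y|) * (M₃ * Real.exp (M₂ * |y|) * |x₁ - x₂| * |y|) * M₁ := by ring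
  calc |Real.exp (-I₁) * (b (h x₁ y) - b (h x₂ y))
        + (Real.exp (-I₁) - Real.exp (-I₂)) * b (h x₂ y)|
      ≤ |Real.exp (-I₁) * (b (h x₁ y) - b (h x₂ y))|
        + |(Real.exp (-I₁) - Real.exp (-I₂)) * b (h x₂ y)| := abs_add_le _ _
    _ ≤ Real.exp (M₂ * |y|) * (M₄ * (Real.exp (M₂ * |y|) * |x₁ - x₂|))
        + Real.exp (M₂ * |y|) * (M₃ * Real.exp (M₂ * |y|) * |x₁ - x₂| * |y|) * M₁ :=
          add_le_add t1 t2
    _ = Real.exp (2 * M₂ * |y|) * (M₁ * M₃ * |y| + M₄) * |x₁ - x₂| := by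
          rw [hE]; ring
end

section
/- Let h be the flow of σ and b as in the context, and define f(x,y) = exp(−∫₀^y σ'(h(x,u)) du) · b(h(x,y)). Then for every R > 0 and all x, y₁, y₂ ∈ ℝ with |y₁| ≤ R and |y₂| ≤ R, |f(x,y₁) − f(x,y₂)| ≤ (M₁ M₂ + M₅ M₄) exp(M₂ R) |y₁ − y₂|. -/
/-- Local Lipschitz estimate in `y` of the Doss–Sussmann field
`f(x,y) = exp(−∫₀^y σ'(h(x,u))du) b(h(x,y))`: for `|y₁|, |y₂| ≤ R`,
`|f(x,y₁) − f(x,y₂)| ≤ (M₁M₂ + M₅M₄) exp(M₂ R) |y₁ − y₂|`. -/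
theorem doss_field_lipschitz_y
    (σ b : ℝ → ℝ) (h : ℝ → ℝ → ℝ) (M₁ M₂ M₃ M₄ M₅ : ℝ)
    (hM₁ : 0 < M₁) (hM₂ : 0 < M₂) (hM₃ : 0 < M₃) (hM₄ : 0 < M₄) (hM₅ : 0 < M₅)
    (hσ : ContDiff ℝ 2 σ)
    (hσb : ∀ x, |σ x| ≤ M₅)
    (hσ'b : ∀ x, |deriv σ x| ≤ M₂)
    (hσ''b : ∀ x, |deriv (deriv σ) x| ≤ M₃)
    (hb : ContDiff ℝ 1 b)
    (hbb : ∀ x, |b x| ≤ M₁)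
    (hb'b : ∀ x, |deriv b x| ≤ M₄)
    (hh0 : ∀ x, h x 0 = x)
    (hhy : ∀ x y, HasDerivAt (fun y => h x y) (σ (h x y)) y)
    (hhx : ∀ x y, HasDerivAt (fun x => h x y)
      (Real.exp (∫ s in (0:ℝ)..y, deriv σ (h x s))) x)
    (f : ℝ → ℝ → ℝ)
    (hf : ∀ x y, f x y = Real.exp (-∫ u in (0:ℝ)..y, deriv σ (h x u)) * b (h x y)) :
    ∀ R : ℝ, 0 < R → ∀ x y₁ y₂ : ℝ, |y₁| ≤ R → |y₂| ≤ R →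
      |f x y₁ - f x y₂| ≤ (M₁ * M₂ + M₅ * M₄) * Real.exp (M₂ * R) * |y₁ - y₂| := by
  intro R hR x y₁ y₂ hy₁ hy₂
  set I : ℝ → ℝ := fun y => ∫ u in (0:ℝ)..y, deriv σ (h x u) with hI
  have hcontσ' : Continuous (deriv σ) := hσ.continuous_deriv one_le_two
  have hconth : Continuous (fun y => h x y) :=
    continuous_iff_continuousAt.2 fun y => (hhy x y).continuousAt
  have hcont : Continuous (fun u => deriv σ (h x u)) := hcontσ'.comp hconth
  have hIderiv : ∀ y : ℝ, HasDerivAt I (deriv σ (h x y)) y := by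
    intro y
    exact intervalIntegral.integral_hasDerivAt_right (hcont.intervalIntegrable 0 y)
      (hcont.stronglyMeasurableAtFilter _ _) hcont.continuousAt
  set g' : ℝ → ℝ := fun y =>
    Real.exp (-(I y)) * (-(deriv σ (h x y))) * b (h x y) +
      Real.exp (-(I y)) * (deriv b (h x y) * σ (h x y)) with hg'
  have hder : ∀ y : ℝ, HasDerivAt (fun y => f x y) (g' y) y := by
    intro y
    have hE : HasDerivAt (fun y => Real.exp (-(I y)))
        (Real.exp (-(I y)) * (-(deriv σ (h x y)))) y := ((hIderiv y).neg).exp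
    have hbh : HasDerivAt (fun y => b (h x y)) (deriv b (h x y) * σ (h x y)) y :=
      ((hb.differentiable one_ne_zero (h x y)).hasDerivAt).comp y (hhy x y)
    have := hE.mul hbh
    exact this.congr_of_eventuallyEq (by filter_upwards with z; simp [hf, hI])
  have hbound : ∀ y ∈ Set.Icc (-R) R, ‖g' y‖ ≤ (M₁ * M₂ + M₅ * M₄) * Real.exp (M₂ * R) := by
    intro y hy
    have hyR : |y| ≤ R := abs_le.2 ⟨hy.1, hy.2⟩
    have hIb : |I y| ≤ M₂ * |y| := by
      have := intervalIntegral.norm_integral_le_of_norm_le_const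
        (C := M₂) (a := (0:ℝ)) (b := y) (f := fun u => deriv σ (h x u))
        (fun u _ => hσ'b (h x u))
      simpa [hI, abs_sub_comm] using this
    have hEb : Real.exp (-(I y)) ≤ Real.exp (M₂ * R) := by
      apply Real.exp_le_exp.2
      calc -(I y) ≤ |I y| := neg_le_abs _
        _ ≤ M₂ * |y| := hIb
        _ ≤ M₂ * R := by nlinarith
    have hEpos : 0 ≤ Real.exp (-(I y)) := (Real.exp_pos _).le
    have h1 : |Real.exp (-(I y)) * (-(deriv σ (h x y))) * b (h x y)| ≤
        Real.exp (M₂ * R) * (M₂ * M₁) := by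
      rw [abs_mul, abs_mul, abs_neg, abs_of_nonneg hEpos, mul_assoc]
      exact mul_le_mul hEb (mul_le_mul (hσ'b _) (hbb _) (abs_nonneg _) hM₂.le)
        (by positivity) (Real.exp_pos _).le
    have h2 : |Real.exp (-(I y)) * (deriv b (h x y) * σ (h x y))| ≤
        Real.exp (M₂ * R) * (M₄ * M₅) := by
      rw [abs_mul, abs_mul, abs_of_nonneg hEpos]
      exact mul_le_mul hEb (mul_le_mul (hb'b _) (hσb _) (abs_nonneg _) hM₄.le)
        (by positivity) (Real.exp_pos _).le
    calc ‖g' y‖ ≤ Real.exp (M₂ * R) * (M₂ * M₁) + Real.exp (M₂ * R) * (M₄ * M₅) :=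
        (abs_add_le _ _).trans (add_le_add h1 h2)
      _ = (M₁ * M₂ + M₅ * M₄) * Real.exp (M₂ * R) := by ring
  have hconv : Convex ℝ (Set.Icc (-R) R) := convex_Icc _ _
  have hmem₁ : y₁ ∈ Set.Icc (-R) R := by
    rcases abs_le.1 hy₁ with ⟨a, b⟩; exact ⟨a, b⟩
  have hmem₂ : y₂ ∈ Set.Icc (-R) R := by
    rcases abs_le.1 hy₂ with ⟨a, b⟩; exact ⟨a, b⟩
  have := hconv.norm_image_sub_le_of_norm_hasDerivWithin_le
    (f := fun y => f x y) (f' := g')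
    (fun y _ => (hder y).hasDerivWithinAt) hbound hmem₂ hmem₁
  simpa [Real.norm_eq_abs] using this
end

section
/- Let h be the flow of σ as in the context, let n, l be positive integers with l > n, and let hˡ be the Euler approximation of h on [−n,n] × [−n,n] defined in the context with step 1/l. Then for all (x,y) ∈ [−n,n] × [−n,n], |h(x,y) − hˡ(x,y)| ≤ M̄² (n/l) exp(M̄ n), where M̄ = max{M₂, M₅}. -/
/-- Local one-step Euler estimate. -/
private lemma euler_local (σ : ℝ → ℝ) (M : ℝ) (hM : 0 ≤ M)
    (hσb : ∀ t, |σ t| ≤ M)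
    (hσlip : ∀ a b, |σ a - σ b| ≤ M * |a - b|)
    (f : ℝ → ℝ) (hf : ∀ t, HasDerivAt f (σ (f t)) t)
    (a y c : ℝ) (hay : a ≤ y) :
    |f y - (c + (y - a) * σ c)| ≤
      (1 + M * (y - a)) * |f a - c| + M ^ 2 * (y - a) ^ 2 := by
  have hIcc : Convex ℝ (Set.Icc a y) := convex_Icc a y
  have hflip : ∀ s ∈ Set.Icc a y, |f s - f a| ≤ M * (s - a) := by
    intro s hs
    have H := hIcc.norm_image_sub_le_of_norm_hasDerivWithin_le
      (fun t _ => (hf t).hasDerivWithinAt) (fun t _ => hσb (f t))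
      (Set.left_mem_Icc.2 hay) hs
    rw [Real.norm_eq_abs, Real.norm_eq_abs] at H
    calc |f s - f a| ≤ M * |s - a| := H
      _ = M * (s - a) := by rw [abs_of_nonneg (by linarith [hs.1])]
  set F : ℝ → ℝ := fun s => f s - (c + (s - a) * σ c) with hFdef
  have hF' : ∀ s, HasDerivAt F (σ (f s) - σ c) s := by
    intro s
    have h1 : HasDerivAt (fun s : ℝ => c + (s - a) * σ c) (σ c) s := by
      simpa using (((hasDerivAt_id s).sub_const a).mul_const (σ c)).const_add c
    exact (hf s).sub h1
  have hC : ∀ s ∈ Set.Icc a y, ‖σ (f s) - σ c‖ ≤ M * (M * (y - a) + |f a - c|) := by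
    intro s hs
    rw [Real.norm_eq_abs]
    calc |σ (f s) - σ c| ≤ M * |f s - c| := hσlip _ _
      _ ≤ M * (|f s - f a| + |f a - c|) :=
          mul_le_mul_of_nonneg_left (abs_sub_le (f s) (f a) c) hM
      _ ≤ M * (M * (y - a) + |f a - c|) := by
          have h1 : |f s - f a| ≤ M * (s - a) := hflip s hs
          have h2 : M * (s - a) ≤ M * (y - a) :=
            mul_le_mul_of_nonneg_left (by linarith [hs.2]) hM
          exact mul_le_mul_of_nonneg_left (by linarith) hM
  have key := hIcc.norm_image_sub_le_of_norm_hasDerivWithin_le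
    (fun t _ => (hF' t).hasDerivWithinAt) hC (Set.left_mem_Icc.2 hay)
    (Set.right_mem_Icc.2 hay)
  rw [Real.norm_eq_abs, Real.norm_eq_abs] at key
  have hFa : F a = f a - c := by simp [hFdef]
  have habs : |F y| ≤ |F a| + M * (M * (y - a) + |f a - c|) * (y - a) := by
    have h3 : |F y| ≤ |F y - F a| + |F a| := by
      calc |F y| = |(F y - F a) + F a| := by ring_nf
        _ ≤ |F y - F a| + |F a| := abs_add_le _ _
    have h4 : |y - a| = y - a := abs_of_nonneg (by linarith)
    rw [h4] at key
    linarith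
  rw [hFa] at habs
  calc |f y - (c + (y - a) * σ c)| = |F y| := rfl
    _ ≤ |f a - c| + M * (M * (y - a) + |f a - c|) * (y - a) := habs
    _ = (1 + M * (y - a)) * |f a - c| + M ^ 2 * (y - a) ^ 2 := by ring
private lemma rec_bound (M l e t : ℝ) (hM : 0 ≤ M) (hl : 0 < l) (k : ℕ)
    (he : e ≤ M ^ 2 / l ^ 2 * k * (1 + M / l) ^ k)
    (ht : t ≤ (1 + M * (1 / l)) * e + M ^ 2 * (1 / l) ^ 2) :
    t ≤ M ^ 2 / l ^ 2 * ((k : ℝ) + 1) * (1 + M / l) ^ (k + 1) := by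
  have hp1 : (1 : ℝ) ≤ 1 + M / l := le_add_of_nonneg_right (by positivity)
  have hpow : (1 : ℝ) ≤ (1 + M / l) ^ (k + 1) := one_le_pow₀ hp1
  have e1 : M * (1 / l) = M / l := by ring
  have e2 : M ^ 2 * (1 / l) ^ 2 = M ^ 2 / l ^ 2 := by ring
  rw [e1, e2] at ht
  have hq : (0 : ℝ) ≤ M ^ 2 / l ^ 2 := by positivity
  calc t ≤ (1 + M / l) * e + M ^ 2 / l ^ 2 := ht
    _ ≤ (1 + M / l) * (M ^ 2 / l ^ 2 * k * (1 + M / l) ^ k) + M ^ 2 / l ^ 2 :=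
        add_le_add (mul_le_mul_of_nonneg_left he (by linarith)) le_rfl
    _ = M ^ 2 / l ^ 2 * ((k : ℝ) * (1 + M / l) ^ (k + 1)) + M ^ 2 / l ^ 2 * 1 := by ring
    _ ≤ M ^ 2 / l ^ 2 * ((k : ℝ) * (1 + M / l) ^ (k + 1)) + M ^ 2 / l ^ 2 * (1 + M / l) ^ (k + 1) := by
        nlinarith
    _ = M ^ 2 / l ^ 2 * ((k : ℝ) + 1) * (1 + M / l) ^ (k + 1) := by ring

private lemma cap_bound (M : ℝ) (hM : 0 ≤ M) (n l : ℕ) (hl : 0 < l)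
    (m : ℕ) (hm : m ≤ n * l) :
    M ^ 2 / (l : ℝ) ^ 2 * m * (1 + M / l) ^ m ≤
      M ^ 2 * ((n : ℝ) / l) * Real.exp (M * n) := by
  have hl' : (0 : ℝ) < l := by exact_mod_cast hl
  have hm' : (m : ℝ) ≤ (n : ℝ) * l := by exact_mod_cast hm
  have h1 : (1 + M / (l : ℝ)) ^ m ≤ Real.exp (M * n) := by
    have hb : 1 + M / (l : ℝ) ≤ Real.exp (M / l) := by
      have := Real.add_one_le_exp (M / (l : ℝ)); linarith
    calc (1 + M / (l : ℝ)) ^ m ≤ (Real.exp (M / l)) ^ m :=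
          pow_le_pow_left₀ (by positivity) hb m
      _ = Real.exp ((m : ℝ) * (M / l)) := (Real.exp_nat_mul _ m).symm
      _ ≤ Real.exp (M * n) := by
          apply Real.exp_le_exp.2
          have hml : (m : ℝ) / l ≤ n := (div_le_iff₀ hl').2 (by linarith)
          calc (m : ℝ) * (M / l) = M * ((m : ℝ) / l) := by ring
            _ ≤ M * n := mul_le_mul_of_nonneg_left hml hM
  have h2 : M ^ 2 / (l : ℝ) ^ 2 * m ≤ M ^ 2 * ((n : ℝ) / l) := by
    have hdd : (m : ℝ) / l ^ 2 ≤ (n : ℝ) / l := by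
      rw [div_le_div_iff₀ (by positivity) hl']
      nlinarith
    calc M ^ 2 / (l : ℝ) ^ 2 * m = M ^ 2 * ((m : ℝ) / l ^ 2) := by ring
      _ ≤ M ^ 2 * ((n : ℝ) / l) := mul_le_mul_of_nonneg_left hdd (by positivity)
  exact mul_le_mul h2 h1 (by positivity) (by positivity)

private lemma euler_aux (σ : ℝ → ℝ) (M : ℝ) (hM : 0 ≤ M)
    (hσb : ∀ t, |σ t| ≤ M)
    (hσlip : ∀ a b, |σ a - σ b| ≤ M * |a - b|)
    (f g : ℝ → ℝ) (hf : ∀ t, HasDerivAt f (σ (f t)) t)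
    (n l : ℕ) (hn : 0 < n) (hnl : n < l)
    (hg0 : g 0 = f 0)
    (hgstep : ∀ k : ℕ, k < n * l →
      g (((k : ℝ) + 1) / l) = g ((k : ℝ) / l) + (1 / l) * σ (g ((k : ℝ) / l)))
    (hginterp : ∀ k : ℕ, k < n * l → ∀ y : ℝ,
      (k : ℝ) / l ≤ y → y < ((k : ℝ) + 1) / l →
      g y = g ((k : ℝ) / l) + (y - (k : ℝ) / l) * σ (g ((k : ℝ) / l))) :
    ∀ y : ℝ, 0 ≤ y → y ≤ n →
      |f y - g y| ≤ M ^ 2 * ((n : ℝ) / l) * Real.exp (M * n) := by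
  have hl : 0 < l := lt_trans hn hnl
  have hl' : (0 : ℝ) < l := by exact_mod_cast hl
  -- grid estimate
  have grid : ∀ k : ℕ, k ≤ n * l →
      |f ((k : ℝ) / l) - g ((k : ℝ) / l)| ≤
        M ^ 2 / (l : ℝ) ^ 2 * k * (1 + M / l) ^ k := by
    intro k
    induction k with
    | zero => intro _; simp [hg0]
    | succ k ih =>
      intro hk1
      have hk : k < n * l := hk1
      have ek := ih (le_of_lt hk)
      have hstep := euler_local σ M hM hσb hσlip f hf ((k : ℝ) / l)
        (((k : ℝ) + 1) / l) (g ((k : ℝ) / l))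
        (by gcongr; linarith)
      have hdiff : ((k : ℝ) + 1) / l - (k : ℝ) / l = 1 / l := by ring
      rw [hdiff, ← hgstep k hk] at hstep
      push_cast
      exact rec_bound M l _ _ hM hl' k ek hstep
  -- pointwise estimate
  intro y hy0 hyn
  set m := ⌊y * l⌋₊ with hmdef
  have hyl : 0 ≤ y * l := by positivity
  have hfl : (m : ℝ) ≤ y * l := Nat.floor_le hyl
  have hm_le : m ≤ n * l := by
    have hle : y * l ≤ ((n * l : ℕ) : ℝ) := by
      push_cast
      nlinarith
    calc m ≤ ⌊((n * l : ℕ) : ℝ)⌋₊ := Nat.floor_le_floor hle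
      _ = n * l := Nat.floor_natCast _
  rcases lt_or_eq_of_le hm_le with hlt | heq
  · -- interior case
    have h1 : (m : ℝ) / l ≤ y := (div_le_iff₀ hl').2 (by linarith)
    have h2 : y < ((m : ℝ) + 1) / l := by
      rw [lt_div_iff₀ hl']
      have := Nat.lt_floor_add_one (y * l)
      push_cast at this ⊢
      linarith
    have hint := hginterp m hlt y h1 h2
    have hloc := euler_local σ M hM hσb hσlip f hf ((m : ℝ) / l) y
      (g ((m : ℝ) / l)) h1
    rw [← hint] at hloc
    have hδ0 : 0 ≤ y - (m : ℝ) / l := by linarith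
    have hδ1 : y - (m : ℝ) / l ≤ 1 / l := by
      have hsum : ((m : ℝ) + 1) / l = (m : ℝ) / l + 1 / l := by ring
      linarith
    have em := grid m (le_of_lt hlt)
    have step2 : |f y - g y| ≤
        (1 + M * (1 / (l : ℝ))) * |f ((m : ℝ) / l) - g ((m : ℝ) / l)| +
          M ^ 2 * (1 / (l : ℝ)) ^ 2 := by
      refine le_trans hloc ?_
      have ha := abs_nonneg (f ((m : ℝ) / l) - g ((m : ℝ) / l))
      have hδ2 : (y - (m : ℝ) / l) ^ 2 ≤ (1 / (l : ℝ)) ^ 2 :=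
        pow_le_pow_left₀ hδ0 hδ1 2
      nlinarith [mul_le_mul_of_nonneg_left hδ1 hM,
        mul_le_mul_of_nonneg_left hδ2 (sq_nonneg M)]
    have := rec_bound M l _ _ hM hl' m em step2
    refine le_trans this ?_
    have hcap := cap_bound M hM n l hl (m + 1) hlt
    push_cast at hcap
    exact hcap
  · -- boundary case : y = n
    have hml : ((m : ℕ) : ℝ) = (n : ℝ) * l := by rw [heq]; push_cast; ring
    have hyeq : y = (m : ℝ) / l := by
      have hge : (n : ℝ) ≤ y := by
        rw [hml] at hfl
        nlinarith
      have : y = (n : ℝ) := le_antisymm hyn hge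
      rw [this, hml]
      field_simp
    rw [hyeq]
    exact le_trans (grid m hm_le) (cap_bound M hM n l hl m hm_le)

/-- Error bound for the Euler approximation `hE` (with step `1/l`) of the flow `h` of `σ`
on the square `[−n,n] × [−n,n]`: `|h(x,y) − hE(x,y)| ≤ M̄² (n/l) exp(M̄ n)`,
where `M̄ = max{M₂, M₅}`. -/
theorem euler_flow_approx
    (σ : ℝ → ℝ) (h : ℝ → ℝ → ℝ) (M₂ M₃ M₅ : ℝ)
    (hM₂ : 0 < M₂) (hM₃ : 0 < M₃) (hM₅ : 0 < M₅)
    (hσ : ContDiff ℝ 2 σ)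
    (hσb : ∀ x, |σ x| ≤ M₅)
    (hσ'b : ∀ x, |deriv σ x| ≤ M₂)
    (hσ''b : ∀ x, |deriv (deriv σ) x| ≤ M₃)
    (hh0 : ∀ x, h x 0 = x)
    (hhy : ∀ x y, HasDerivAt (fun y => h x y) (σ (h x y)) y)
    (n l : ℕ) (hn : 0 < n) (hnl : n < l)
    (hE : ℝ → ℝ → ℝ)
    -- defining relations of the Euler scheme on the grid `y_k = k/l`, `|k| ≤ n·l`
    (hE0 : ∀ x : ℝ, |x| ≤ (n : ℝ) → hE x 0 = x)
    (hEstep : ∀ x : ℝ, |x| ≤ (n : ℝ) → ∀ k : ℕ, k < n * l →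
      hE x (((k : ℝ) + 1) / l) =
        hE x ((k : ℝ) / l) + (1 / l) * σ (hE x ((k : ℝ) / l)))
    (hEstep' : ∀ x : ℝ, |x| ≤ (n : ℝ) → ∀ k : ℕ, k < n * l →
      hE x (-(((k : ℝ) + 1) / l)) =
        hE x (-((k : ℝ) / l)) - (1 / l) * σ (hE x (-((k : ℝ) / l))))
    (hEinterp : ∀ x : ℝ, |x| ≤ (n : ℝ) → ∀ k : ℕ, k < n * l → ∀ y : ℝ,
      (k : ℝ) / l ≤ y → y < ((k : ℝ) + 1) / l →
      hE x y = hE x ((k : ℝ) / l) + (y - (k : ℝ) / l) * σ (hE x ((k : ℝ) / l)))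
    (hEinterp' : ∀ x : ℝ, |x| ≤ (n : ℝ) → ∀ k : ℕ, k < n * l → ∀ y : ℝ,
      -(((k : ℝ) + 1) / l) < y → y ≤ -((k : ℝ) / l) →
      hE x y = hE x (-((k : ℝ) / l)) - (-((k : ℝ) / l) - y) * σ (hE x (-((k : ℝ) / l)))) :
    ∀ x y : ℝ, |x| ≤ (n : ℝ) → |y| ≤ (n : ℝ) →
      |h x y - hE x y| ≤
        (max M₂ M₅) ^ 2 * ((n : ℝ) / l) * Real.exp (max M₂ M₅ * n) := by
  set M : ℝ := max M₂ M₅ with hMdef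
  have hM : 0 ≤ M := le_trans hM₂.le (le_max_left _ _)
  -- σ is Lipschitz with constant M₂ ≤ M
  have hd : Differentiable ℝ σ := hσ.differentiable (by norm_num)
  have hσlip₂ : ∀ a b : ℝ, |σ a - σ b| ≤ M₂ * |a - b| := by
    intro a b
    have H := (convex_univ : Convex ℝ (Set.univ : Set ℝ)).norm_image_sub_le_of_norm_hasDerivWithin_le
      (fun t _ => (hd t).hasDerivAt.hasDerivWithinAt)
      (fun t _ => by rw [Real.norm_eq_abs]; exact hσ'b t)
      (Set.mem_univ b) (Set.mem_univ a)
    simpa [Real.norm_eq_abs] using H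
  have hσbM : ∀ t, |σ t| ≤ M := fun t => (hσb t).trans (le_max_right _ _)
  have hσlip : ∀ a b : ℝ, |σ a - σ b| ≤ M * |a - b| := fun a b =>
    (hσlip₂ a b).trans (mul_le_mul_of_nonneg_right (le_max_left _ _) (abs_nonneg _))
  intro x y hx hy
  rcases le_or_gt 0 y with hy0 | hy0
  · -- nonnegative y
    exact euler_aux σ M hM hσbM hσlip (h x) (hE x) (hhy x) n l hn hnl
      (by rw [hE0 x hx, hh0 x]) (hEstep x hx) (hEinterp x hx) y hy0 (abs_le.1 hy).2
  · -- negative y : reflect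
    have key := euler_aux (fun t => -σ t) M hM
      (fun t => by rw [abs_neg]; exact hσbM t)
      (fun a b => by
        show |(-σ a) - (-σ b)| ≤ M * |a - b|
        rw [neg_sub_neg, abs_sub_comm]
        exact hσlip a b)
      (fun s => h x (-s)) (fun s => hE x (-s))
      (fun s => by
        have := (hhy x (-s)).comp s (hasDerivAt_neg s)
        simpa [mul_comm, Function.comp_def] using this)
      n l hn hnl
      (by simp only [neg_zero]; rw [hE0 x hx, hh0 x])
      (fun k hk => by
        have H := hEstep' x hx k hk
        show hE x (-(((k : ℝ) + 1) / l)) =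
          hE x (-((k : ℝ) / l)) + 1 / l * -σ (hE x (-((k : ℝ) / l)))
        rw [H]; ring)
      (fun k hk y' h1 h2 => by
        have H := hEinterp' x hx k hk (-y') (by linarith) (by linarith)
        show hE x (-y') =
          hE x (-((k : ℝ) / l)) + (y' - (k : ℝ) / l) * -σ (hE x (-((k : ℝ) / l)))
        rw [H]; ring)
      (-y) (by linarith) (by linarith [(abs_le.1 hy).1])
    simpa using key
end

section
/- Let h be the flow of σ and b as in the context, define f(x,y) = exp(−∫₀^y σ'(h(x,u)) du) · b(h(x,y)), and let T > 0 and x₀ ∈ ℝ. Let w, w̃ : [0,T] → ℝ be continuous with sup_{0≤t≤T} |w(t) − w̃(t)| ≤ 1, and set W = sup_{0≤t≤T} |w(t)|. Let Y, Ỹ : [0,T] → ℝ be differentiable with Y(0) = Ỹ(0) = x₀, Y'(t) = f(Y(t), w(t)) and Ỹ'(t) = f(Ỹ(t), w̃(t)) for all t ∈ [0,T]. Then sup_{0≤t≤T} |Y(t) − Ỹ(t)| ≤ α · exp(T·κ) · sup_{0≤t≤T} |w(t) − w̃(t)|, where α = T (M₁ M₂ exp(M₂) + M₄ M₅) exp(M₂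 W) and κ = (M₁ M₃ W + M₄) exp(2 M₂ W). -/
private lemma lip_of_deriv_bound' {g g' : ℝ → ℝ} {C : ℝ}
    (hg : ∀ x, HasDerivAt g (g' x) x) (hC : ∀ x, |g' x| ≤ C) (a c : ℝ) :
    |g a - g c| ≤ C * |a - c| := by
  have := Convex.norm_image_sub_le_of_norm_hasDerivWithin_le
    (f := g) (f' := g') (s := Set.univ) (C := C)
    (fun x _ => (hg x).hasDerivWithinAt) (fun x _ => hC x) convex_univ
    (Set.mem_univ c) (Set.mem_univ a)
  simpa using this

private lemma exp_sub_one_le' {u : ℝ} : Real.exp u - 1 ≤ u * Real.exp u := by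
  have h1 : -u + 1 ≤ Real.exp (-u) := Real.add_one_le_exp (-u)
  have h2 : Real.exp (-u) * Real.exp u = 1 := by rw [← Real.exp_add]; simp
  nlinarith [Real.exp_pos u]

private lemma exp_abs_sub' (a c : ℝ) :
    |Real.exp a - Real.exp c| ≤ Real.exp (max a c) * |a - c| := by
  wlog hac : c ≤ a generalizing a c
  · rw [abs_sub_comm, abs_sub_comm a c, max_comm]
    exact this c a (le_of_not_ge hac)
  rw [abs_of_nonneg (sub_nonneg.2 (Real.exp_le_exp.2 hac)), abs_of_nonneg (sub_nonneg.2 hac),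
    max_eq_left hac]
  have h2 := exp_sub_one_le' (u := a - c)
  have h3 : Real.exp c * Real.exp (a - c) = Real.exp a := by rw [← Real.exp_add]; ring_nf
  nlinarith [Real.exp_pos c, Real.exp_pos (a - c)]

private lemma abs_mem_uIoc' {y u : ℝ} (hu : u ∈ Set.uIoc 0 y) : |u| ≤ |y| := by
  obtain ⟨h1, h2⟩ := hu
  refine abs_le.2 ⟨?_, h2.trans (max_le (abs_nonneg y) (le_abs_self y))⟩
  exact (le_min (neg_nonpos.2 (abs_nonneg y)) (neg_abs_le y)).trans h1.le

set_option maxHeartbeats 2000000 in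
/-- Gronwall-type comparison of two solutions of the Doss–Sussmann ODE driven by
close paths `w` and `w̃`: `sup|Y − Ỹ| ≤ α exp(Tκ) sup|w − w̃|`, with
`α = T(M₁M₂ exp(M₂) + M₄M₅) exp(M₂ W)` and `κ = (M₁M₃ W + M₄) exp(2M₂ W)`,
where `W = sup_{[0,T]} |w|`. -/
theorem doss_ode_comparison
    (σ b : ℝ → ℝ) (h : ℝ → ℝ → ℝ) (M₁ M₂ M₃ M₄ M₅ : ℝ)
    (hM₁ : 0 < M₁) (hM₂ : 0 < M₂) (hM₃ : 0 < M₃) (hM₄ : 0 < M₄) (hM₅ : 0 < M₅)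
    (hσ : ContDiff ℝ 2 σ)
    (hσb : ∀ x, |σ x| ≤ M₅)
    (hσ'b : ∀ x, |deriv σ x| ≤ M₂)
    (hσ''b : ∀ x, |deriv (deriv σ) x| ≤ M₃)
    (hb : ContDiff ℝ 1 b)
    (hbb : ∀ x, |b x| ≤ M₁)
    (hb'b : ∀ x, |deriv b x| ≤ M₄)
    (hh0 : ∀ x, h x 0 = x)
    (hhy : ∀ x y, HasDerivAt (fun y => h x y) (σ (h x y)) y)
    (hhx : ∀ x y, HasDerivAt (fun x => h x y)
      (Real.exp (∫ s in (0:ℝ)..y, deriv σ (h x s))) x)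
    (f : ℝ → ℝ → ℝ)
    (hf : ∀ x y, f x y = Real.exp (-∫ u in (0:ℝ)..y, deriv σ (h x u)) * b (h x y))
    (T : ℝ) (hT : 0 < T) (x₀ : ℝ)
    (w w' : ℝ → ℝ)
    (hw : ContinuousOn w (Set.Icc 0 T)) (hw' : ContinuousOn w' (Set.Icc 0 T))
    (W Δ : ℝ)
    (hW : W = sSup ((fun t => |w t|) '' Set.Icc (0 : ℝ) T))
    (hΔ : Δ = sSup ((fun t => |w t - w' t|) '' Set.Icc (0 : ℝ) T))
    (hΔ1 : Δ ≤ 1)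
    (Y Y' : ℝ → ℝ)
    (hY0 : Y 0 = x₀) (hY'0 : Y' 0 = x₀)
    (hYode : ∀ t ∈ Set.Icc (0 : ℝ) T, HasDerivAt Y (f (Y t) (w t)) t)
    (hY'ode : ∀ t ∈ Set.Icc (0 : ℝ) T, HasDerivAt Y' (f (Y' t) (w' t)) t) :
    ∀ t ∈ Set.Icc (0 : ℝ) T,
      |Y t - Y' t| ≤
        (T * (M₁ * M₂ * Real.exp M₂ + M₄ * M₅) * Real.exp (M₂ * W)) *
          Real.exp (T * ((M₁ * M₃ * W + M₄) * Real.exp (2 * M₂ * W))) * Δ := by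
  -- Basic regularity facts
  have hσ'cont : Continuous (deriv σ) := hσ.continuous_deriv (by norm_num)
  have hσ'diff : Differentiable ℝ (deriv σ) := by
    have h2 : ContDiff ℝ ((1:ℕ) + 1) σ := by exact_mod_cast hσ
    exact ((contDiff_succ_iff_deriv.mp h2).2.2).differentiable (by simp)
  have hbdiff : Differentiable ℝ b := hb.differentiable (by simp)
  have hhyc : ∀ x, Continuous fun y => h x y :=
    fun x => Differentiable.continuous (fun y => (hhy x y).differentiableAt)
  have hcint : ∀ x, Continuous fun u => deriv σ (h x u) := fun x => hσ'cont.comp (hhyc x)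
  have hInt : ∀ x a c, IntervalIntegrable (fun u => deriv σ (h x u)) MeasureTheory.volume a c :=
    fun x a c => (hcint x).intervalIntegrable a c
  have hIderiv : ∀ x y, HasDerivAt (fun y => ∫ u in (0:ℝ)..y, deriv σ (h x u))
      (deriv σ (h x y)) y := fun x y =>
    intervalIntegral.integral_hasDerivAt_right (hInt x 0 y)
      ((hcint x).aestronglyMeasurable.stronglyMeasurableAtFilter) (hcint x).continuousAt
  have hIabs : ∀ x y, |∫ u in (0:ℝ)..y, deriv σ (h x u)| ≤ M₂ * |y| := by
    intro x y
    have := lip_of_deriv_bound' (hIderiv x) (fun u => hσ'b (h x u)) y 0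
    simpa using this
  have hIlipY : ∀ x a c, |(∫ u in (0:ℝ)..a, deriv σ (h x u))
      - ∫ u in (0:ℝ)..c, deriv σ (h x u)| ≤ M₂ * |a - c| := fun x a c =>
    lip_of_deriv_bound' (hIderiv x) (fun u => hσ'b (h x u)) a c
  have hhyLip : ∀ x a c, |h x a - h x c| ≤ M₅ * |a - c| := fun x a c =>
    lip_of_deriv_bound' (hhy x) (fun u => hσb (h x u)) a c
  have hhxLip : ∀ y x x', |h x y - h x' y| ≤ Real.exp (M₂ * |y|) * |x - x'| := by
    intro y x x'
    refine lip_of_deriv_bound' (fun u => hhx u y) (fun u => ?_) x x'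
    rw [abs_of_pos (Real.exp_pos _)]
    exact Real.exp_le_exp.2 ((le_abs_self _).trans (hIabs u y))
  have hσ'Lip : ∀ a c, |deriv σ a - deriv σ c| ≤ M₃ * |a - c| :=
    lip_of_deriv_bound' (fun x => (hσ'diff x).hasDerivAt) hσ''b
  have hbLip : ∀ a c, |b a - b c| ≤ M₄ * |a - c| :=
    lip_of_deriv_bound' (fun x => (hbdiff x).hasDerivAt) hb'b
  -- Lipschitz dependence in x of the integral
  have hIlipX : ∀ y x x', |(∫ u in (0:ℝ)..y, deriv σ (h x u))
      - ∫ u in (0:ℝ)..y, deriv σ (h x' u)| ≤ M₃ * Real.exp (M₂ * |y|) * |x - x'| * |y| := by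
    intro y x x'
    have hsub : (∫ u in (0:ℝ)..y, deriv σ (h x u)) - ∫ u in (0:ℝ)..y, deriv σ (h x' u)
        = ∫ u in (0:ℝ)..y, (deriv σ (h x u) - deriv σ (h x' u)) :=
      (intervalIntegral.integral_sub (hInt x 0 y) (hInt x' 0 y)).symm
    rw [hsub]
    have hbd : ∀ u ∈ Set.uIoc (0:ℝ) y,
        ‖deriv σ (h x u) - deriv σ (h x' u)‖ ≤ M₃ * Real.exp (M₂ * |y|) * |x - x'| := by
      intro u hu
      have hu' : |u| ≤ |y| := abs_mem_uIoc' hu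
      rw [Real.norm_eq_abs]
      calc |deriv σ (h x u) - deriv σ (h x' u)| ≤ M₃ * |h x u - h x' u| := hσ'Lip _ _
        _ ≤ M₃ * (Real.exp (M₂ * |u|) * |x - x'|) := by gcongr; exact hhxLip u x x'
        _ ≤ M₃ * (Real.exp (M₂ * |y|) * |x - x'|) := by
            have : M₂ * |u| ≤ M₂ * |y| := by nlinarith
            gcongr
        _ = M₃ * Real.exp (M₂ * |y|) * |x - x'| := by ring
    have := intervalIntegral.norm_integral_le_of_norm_le_const hbd
    calc |∫ u in (0:ℝ)..y, (deriv σ (h x u) - deriv σ (h x' u))|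
        ≤ M₃ * Real.exp (M₂ * |y|) * |x - x'| * |y - 0| := this
      _ = M₃ * Real.exp (M₂ * |y|) * |x - x'| * |y| := by rw [sub_zero]
  -- Bounds from the suprema
  have h0T : (0:ℝ) ∈ Set.Icc (0:ℝ) T := Set.mem_Icc.2 ⟨le_rfl, hT.le⟩
  have hwW : ∀ t ∈ Set.Icc (0:ℝ) T, |w t| ≤ W := by
    intro t ht
    have hbdd : BddAbove ((fun t => |w t|) '' Set.Icc (0:ℝ) T) :=
      (isCompact_Icc.image_of_continuousOn hw.abs).bddAbove
    exact hW ▸ le_csSup hbdd ⟨t, ht, rfl⟩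
  have hwΔ : ∀ t ∈ Set.Icc (0:ℝ) T, |w t - w' t| ≤ Δ := by
    intro t ht
    have hbdd : BddAbove ((fun t => |w t - w' t|) '' Set.Icc (0:ℝ) T) :=
      (isCompact_Icc.image_of_continuousOn (hw.sub hw').abs).bddAbove
    exact hΔ ▸ le_csSup hbdd ⟨t, ht, rfl⟩
  have hW0 : 0 ≤ W := (abs_nonneg _).trans (hwW 0 h0T)
  have hΔ0 : 0 ≤ Δ := (abs_nonneg _).trans (hwΔ 0 h0T)
  -- Lipschitz estimate for f in the first variable
  have lemA : ∀ y x x', |y| ≤ W →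
      |f x y - f x' y| ≤ ((M₁ * M₃ * W + M₄) * Real.exp (2 * M₂ * W)) * |x - x'| := by
    intro y x x' hyW
    rw [hf, hf]
    set Jx := ∫ u in (0:ℝ)..y, deriv σ (h x u) with hJx
    set Jx' := ∫ u in (0:ℝ)..y, deriv σ (h x' u) with hJx'
    set E := Real.exp (M₂ * |y|) with hE
    have hE1 : (1:ℝ) ≤ E := by
      rw [hE]; nlinarith [Real.add_one_le_exp (M₂ * |y|), abs_nonneg y]
    have hEpos : 0 < E := lt_of_lt_of_le one_pos hE1
    have key : Real.exp (-Jx) * b (h x y) - Real.exp (-Jx') * b (h x' y)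
        = (Real.exp (-Jx) - Real.exp (-Jx')) * b (h x y)
          + Real.exp (-Jx') * (b (h x y) - b (h x' y)) := by ring
    rw [key]
    have hmax : max (-Jx) (-Jx') ≤ M₂ * |y| :=
      max_le ((neg_le_abs _).trans (hIabs x y)) ((neg_le_abs _).trans (hIabs x' y))
    have hA : |Real.exp (-Jx) - Real.exp (-Jx')| ≤ E * (M₃ * E * |x - x'| * |y|) := by
      calc |Real.exp (-Jx) - Real.exp (-Jx')|
          ≤ Real.exp (max (-Jx) (-Jx')) * |(-Jx) - (-Jx')| := exp_abs_sub' _ _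
        _ ≤ E * (M₃ * E * |x - x'| * |y|) := by
            have h1 : Real.exp (max (-Jx) (-Jx')) ≤ E := by
              rw [hE]; exact Real.exp_le_exp.2 hmax
            have h2 : |(-Jx) - (-Jx')| ≤ M₃ * E * |x - x'| * |y| := by
              rw [show (-Jx) - (-Jx') = -(Jx - Jx') by ring, abs_neg]
              exact hIlipX y x x'
            exact mul_le_mul h1 h2 (abs_nonneg _) hEpos.le
    have hA' : |Real.exp (-Jx')| ≤ E := by
      rw [abs_of_pos (Real.exp_pos _), hE]
      exact Real.exp_le_exp.2 ((neg_le_abs _).trans (hIabs x' y))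
    have hB : |b (h x y) - b (h x' y)| ≤ M₄ * (E * |x - x'|) := by
      calc |b (h x y) - b (h x' y)| ≤ M₄ * |h x y - h x' y| := hbLip _ _
        _ ≤ M₄ * (E * |x - x'|) := by gcongr; exact hhxLip y x x'
    calc |(Real.exp (-Jx) - Real.exp (-Jx')) * b (h x y)
          + Real.exp (-Jx') * (b (h x y) - b (h x' y))|
        ≤ |Real.exp (-Jx) - Real.exp (-Jx')| * |b (h x y)|
          + |Real.exp (-Jx')| * |b (h x y) - b (h x' y)| := by
          refine (abs_add_le _ _).trans ?_
          rw [abs_mul, abs_mul]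
      _ ≤ (E * (M₃ * E * |x - x'| * |y|)) * M₁ + E * (M₄ * (E * |x - x'|)) := by
          refine add_le_add (mul_le_mul hA (hbb _) (abs_nonneg _) (by positivity)) ?_
          exact mul_le_mul hA' hB (abs_nonneg _) hEpos.le
      _ = (M₁ * M₃ * |y| + M₄) * (E * E) * |x - x'| := by ring
      _ ≤ ((M₁ * M₃ * W + M₄) * Real.exp (2 * M₂ * W)) * |x - x'| := by
          have hEE : E * E ≤ Real.exp (2 * M₂ * W) := by
            rw [hE, ← Real.exp_add]
            apply Real.exp_le_exp.2; nlinarith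
          have h1 : M₁ * M₃ * |y| + M₄ ≤ M₁ * M₃ * W + M₄ := by
            nlinarith [mul_le_mul_of_nonneg_left hyW (by positivity : (0:ℝ) ≤ M₁ * M₃)]
          have := mul_le_mul h1 hEE (by positivity) (by positivity)
          exact mul_le_mul_of_nonneg_right this (abs_nonneg _)
  -- Estimate for f in the second variable
  have lemB : ∀ x a c, |a| ≤ W → |a - c| ≤ Δ →
      |f x a - f x c| ≤ (M₁ * M₂ * Real.exp M₂ + M₄ * M₅) * Real.exp (M₂ * W) * Δ := by
    intro x a c haW hacΔ
    rw [hf, hf]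
    set Ja := ∫ u in (0:ℝ)..a, deriv σ (h x u) with hJa
    set Jc := ∫ u in (0:ℝ)..c, deriv σ (h x u) with hJc
    have hcabs : |c| ≤ W + Δ := by
      have h1 := abs_add_le a (c - a)
      have h2 : |c - a| = |a - c| := abs_sub_comm c a
      simp only [add_sub_cancel] at h1
      linarith
    have key : Real.exp (-Ja) * b (h x a) - Real.exp (-Jc) * b (h x c)
        = (Real.exp (-Ja) - Real.exp (-Jc)) * b (h x c)
          + Real.exp (-Ja) * (b (h x a) - b (h x c)) := by ring
    rw [key]
    have hmax : max (-Ja) (-Jc) ≤ M₂ * W + M₂ := by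
      refine max_le ?_ ?_
      · have := (neg_le_abs _).trans (hIabs x a)
        nlinarith
      · have := (neg_le_abs _).trans (hIabs x c)
        nlinarith
    have hA : |Real.exp (-Ja) - Real.exp (-Jc)|
        ≤ Real.exp (M₂ * W) * Real.exp M₂ * (M₂ * Δ) := by
      calc |Real.exp (-Ja) - Real.exp (-Jc)|
          ≤ Real.exp (max (-Ja) (-Jc)) * |(-Ja) - (-Jc)| := exp_abs_sub' _ _
        _ ≤ (Real.exp (M₂ * W) * Real.exp M₂) * (M₂ * Δ) := by
            have h1 : Real.exp (max (-Ja) (-Jc)) ≤ Real.exp (M₂ * W) * Real.exp M₂ := by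
              rw [← Real.exp_add]; exact Real.exp_le_exp.2 hmax
            have h2 : |(-Ja) - (-Jc)| ≤ M₂ * Δ := by
              rw [show (-Ja) - (-Jc) = -(Ja - Jc) by ring, abs_neg]
              exact (hIlipY x a c).trans (by nlinarith)
            exact mul_le_mul h1 h2 (abs_nonneg _) (by positivity)
    have hA' : |Real.exp (-Ja)| ≤ Real.exp (M₂ * W) := by
      rw [abs_of_pos (Real.exp_pos _)]
      refine Real.exp_le_exp.2 (((neg_le_abs _).trans (hIabs x a)).trans ?_)
      nlinarith
    have hB : |b (h x a) - b (h x c)| ≤ M₄ * (M₅ * Δ) := by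
      calc |b (h x a) - b (h x c)| ≤ M₄ * |h x a - h x c| := hbLip _ _
        _ ≤ M₄ * (M₅ * Δ) := by
            refine mul_le_mul_of_nonneg_left ((hhyLip x a c).trans ?_) hM₄.le
            nlinarith
    calc |(Real.exp (-Ja) - Real.exp (-Jc)) * b (h x c)
          + Real.exp (-Ja) * (b (h x a) - b (h x c))|
        ≤ |Real.exp (-Ja) - Real.exp (-Jc)| * |b (h x c)|
          + |Real.exp (-Ja)| * |b (h x a) - b (h x c)| := by
          refine (abs_add_le _ _).trans ?_
          rw [abs_mul, abs_mul]
      _ ≤ (Real.exp (M₂ * W) * Real.exp M₂ * (M₂ * Δ)) * M₁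
          + Real.exp (M₂ * W) * (M₄ * (M₅ * Δ)) := by
          refine add_le_add (mul_le_mul hA (hbb _) (abs_nonneg _) (by positivity)) ?_
          exact mul_le_mul hA' hB (abs_nonneg _) (Real.exp_pos _).le
      _ = (M₁ * M₂ * Real.exp M₂ + M₄ * M₅) * Real.exp (M₂ * W) * Δ := by ring
  -- Grönwall
  set κ := (M₁ * M₃ * W + M₄) * Real.exp (2 * M₂ * W) with hκ
  set ε := (M₁ * M₂ * Real.exp M₂ + M₄ * M₅) * Real.exp (M₂ * W) * Δ with hε
  have hκpos : 0 < κ := by positivity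
  have hgc : ContinuousOn (fun t => Y t - Y' t) (Set.Icc 0 T) := fun t ht =>
    (((hYode t ht).sub (hY'ode t ht)).continuousAt).continuousWithinAt
  have hg' : ∀ t ∈ Set.Ico (0:ℝ) T,
      HasDerivWithinAt (fun t => Y t - Y' t) (f (Y t) (w t) - f (Y' t) (w' t)) (Set.Ici t) t :=
    fun t ht => (((hYode t (Set.Ico_subset_Icc_self ht)).sub
      (hY'ode t (Set.Ico_subset_Icc_self ht)))).hasDerivWithinAt
  have hg0 : ‖Y 0 - Y' 0‖ ≤ 0 := by simp [hY0, hY'0]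
  have hbound : ∀ t ∈ Set.Ico (0:ℝ) T,
      ‖f (Y t) (w t) - f (Y' t) (w' t)‖ ≤ κ * ‖Y t - Y' t‖ + ε := by
    intro t ht
    have ht' : t ∈ Set.Icc (0:ℝ) T := Set.Ico_subset_Icc_self ht
    rw [Real.norm_eq_abs, Real.norm_eq_abs]
    have hsplit : f (Y t) (w t) - f (Y' t) (w' t)
        = (f (Y t) (w t) - f (Y' t) (w t)) + (f (Y' t) (w t) - f (Y' t) (w' t)) := by ring
    rw [hsplit]
    refine (abs_add_le _ _).trans (add_le_add ?_ ?_)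
    · exact lemA (w t) (Y t) (Y' t) (hwW t ht')
    · exact lemB (Y' t) (w t) (w' t) (hwW t ht') (hwΔ t ht')
  have main := norm_le_gronwallBound_of_norm_deriv_right_le hgc hg' hg0 hbound
  intro t ht
  have h1 := main t ht
  rw [Real.norm_eq_abs] at h1
  refine h1.trans ?_
  rw [gronwallBound_of_K_ne_0 hκpos.ne']
  have ht0 : 0 ≤ t := ht.1
  have htT : t ≤ T := ht.2
  have hε0 : 0 ≤ ε := by positivity
  have e1 : Real.exp (κ * (t - 0)) - 1 ≤ κ * T * Real.exp (T * κ) := by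
    refine (exp_sub_one_le' (u := κ * (t - 0))).trans ?_
    rw [sub_zero]
    have hexp : Real.exp (κ * t) ≤ Real.exp (T * κ) :=
      Real.exp_le_exp.2 (by nlinarith)
    have hκt : κ * t ≤ κ * T := by nlinarith
    exact mul_le_mul hκt hexp (Real.exp_pos _).le (by positivity)
  calc (0:ℝ) * Real.exp (κ * (t - 0)) + ε / κ * (Real.exp (κ * (t - 0)) - 1)
      = ε / κ * (Real.exp (κ * (t - 0)) - 1) := by ring
    _ ≤ ε / κ * (κ * T * Real.exp (T * κ)) := mul_le_mul_of_nonneg_left e1 (by positivity)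
    _ = ε * T * Real.exp (T * κ) := by field_simp
    _ = (T * (M₁ * M₂ * Real.exp M₂ + M₄ * M₅) * Real.exp (M₂ * W)) *
          Real.exp (T * κ) * Δ := by rw [hε]; ring
end

section
/- Let T > 0, L, D, Z₁, Z₂, E ≥ 0, let m be a positive integer, set r = T/m and t_k = k·r. Let w : [0,T] → ℝ satisfy |w(s) − w(t)| ≤ L|s − t| for all s, t ∈ [0,T]. Let f, f̃ : ℝ × ℝ → ℝ satisfy, for all relevant arguments: |f(x,y)| ≤ D and |f̃(x,y)| ≤ D; |f(x₁,y) − f(x₂,y)| ≤ Z₁|x₁ − x₂|; |f(x,y₁) − f(x,y₂)| ≤ Z₂|y₁ − y₂|; and |f(x,y) − f̃(x,y)| ≤ E. Let Y : [0,T] → ℝ be differentiable with Y(0) = x₀ and Y'(t) = f(Y(t), w(t)) for all t ∈ [0,T], and let Ŷ be the Euler polygon Ŷ(0) = x₀, Ŷ(t_{k+1}) = Ŷ(t_k) + r·f̃(Ŷ(t_k), w(t_k)), with Ŷ(t) = Ŷ(t_k) + (t − t_k)·f̃(Ŷ(t_k), w(t_k)) for t_k ≤ t < t_{k+1}. Then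 for all t ∈ [0,T], |Y(t) − Ŷ(t)| ≤ (Z₁ D r + Z₂ L r + E) · T · exp(Z₁ T). -/
set_option maxHeartbeats 1000000


/-- Error bound for the Euler polygon approximation (with perturbed field `f̃` and
Lipschitz driving path `w`) of the ODE `Y' = f(Y, w)`:
`|Y(t) − Ŷ(t)| ≤ (Z₁ D r + Z₂ L r + E) T exp(Z₁ T)` for all `t ∈ [0,T]`. -/
theorem euler_scheme_error
    (T L D Z₁ Z₂ E : ℝ) (hT : 0 < T)
    (hL : 0 ≤ L) (hD : 0 ≤ D) (hZ₁ : 0 ≤ Z₁) (hZ₂ : 0 ≤ Z₂) (hE : 0 ≤ E)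
    (m : ℕ) (hm : 0 < m) (x₀ : ℝ)
    (w : ℝ → ℝ)
    (hw : ∀ s ∈ Set.Icc (0 : ℝ) T, ∀ t ∈ Set.Icc (0 : ℝ) T, |w s - w t| ≤ L * |s - t|)
    (f f' : ℝ → ℝ → ℝ)
    (hfD : ∀ x y : ℝ, |f x y| ≤ D)
    (hf'D : ∀ x y : ℝ, |f' x y| ≤ D)
    (hfLx : ∀ x₁ x₂ y : ℝ, |f x₁ y - f x₂ y| ≤ Z₁ * |x₁ - x₂|)
    (hfLy : ∀ x y₁ y₂ : ℝ, |f x y₁ - f x y₂| ≤ Z₂ * |y₁ - y₂|)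
    (hff' : ∀ x y : ℝ, |f x y - f' x y| ≤ E)
    (Y : ℝ → ℝ)
    (hY0 : Y 0 = x₀)
    (hYode : ∀ t ∈ Set.Icc (0 : ℝ) T, HasDerivAt Y (f (Y t) (w t)) t)
    (Yh : ℝ → ℝ)
    (hYh0 : Yh 0 = x₀)
    (hYhstep : ∀ k : ℕ, k < m →
      Yh (((k : ℝ) + 1) * (T / m)) =
        Yh ((k : ℝ) * (T / m)) +
          (T / m) * f' (Yh ((k : ℝ) * (T / m))) (w ((k : ℝ) * (T / m))))
    (hYhinterp : ∀ k : ℕ, k < m → ∀ t : ℝ,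
      (k : ℝ) * (T / m) ≤ t → t < ((k : ℝ) + 1) * (T / m) →
      Yh t = Yh ((k : ℝ) * (T / m)) +
        (t - (k : ℝ) * (T / m)) * f' (Yh ((k : ℝ) * (T / m))) (w ((k : ℝ) * (T / m)))) :
    ∀ t ∈ Set.Icc (0 : ℝ) T,
      |Y t - Yh t| ≤ (Z₁ * D * (T / m) + Z₂ * L * (T / m) + E) * T * Real.exp (Z₁ * T) := by
  intro t ht
  have hm' : (0:ℝ) < m := Nat.cast_pos.mpr hm
  set r : ℝ := T / m with hr_def
  have hr : 0 < r := div_pos hT hm'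
  have hmr : (m : ℝ) * r = T := by rw [hr_def]; field_simp
  set δ : ℝ := Z₁ * D * r + Z₂ * L * r + E with hδ_def
  have hδ : 0 ≤ δ := by positivity
  set g : ℝ → ℝ := fun s => f (Y s) (w s) with hg_def
  -- continuity facts
  have hYcont : ContinuousOn Y (Set.Icc 0 T) := fun s hs =>
    (hYode s hs).continuousAt.continuousWithinAt
  have hwcont : ContinuousOn w (Set.Icc 0 T) := by
    have hlip : LipschitzOnWith (Real.toNNReal L) w (Set.Icc 0 T) := by
      rw [lipschitzOnWith_iff_dist_le_mul]
      intro x hx y hy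
      rw [Real.dist_eq, Real.dist_eq, Real.coe_toNNReal L hL]
      exact hw x hx y hy
    exact hlip.continuousOn
  have hFcont : Continuous (fun p : ℝ × ℝ => f p.1 p.2) := by
    have hlip : LipschitzWith (Real.toNNReal (Z₁ + Z₂)) (fun p : ℝ × ℝ => f p.1 p.2) := by
      apply LipschitzWith.of_dist_le_mul
      intro p q
      rw [Real.coe_toNNReal _ (by linarith)]
      have h1 : dist p.1 q.1 ≤ dist p q := by rw [Prod.dist_eq]; exact le_max_left _ _
      have h2 : dist p.2 q.2 ≤ dist p q := by rw [Prod.dist_eq]; exact le_max_right _ _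
      have htri : dist (f p.1 p.2) (f q.1 q.2)
          ≤ |f p.1 p.2 - f q.1 p.2| + |f q.1 p.2 - f q.1 q.2| := by
        rw [Real.dist_eq]
        exact abs_sub_le _ _ _
      have e1 : |f p.1 p.2 - f q.1 p.2| ≤ Z₁ * dist p q := by
        refine (hfLx p.1 q.1 p.2).trans ?_
        rw [← Real.dist_eq]
        exact mul_le_mul_of_nonneg_left h1 hZ₁
      have e2 : |f q.1 p.2 - f q.1 q.2| ≤ Z₂ * dist p q := by
        refine (hfLy q.1 p.2 q.2).trans ?_
        rw [← Real.dist_eq]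
        exact mul_le_mul_of_nonneg_left h2 hZ₂
      have := dist_nonneg (x := p) (y := q)
      nlinarith
    exact hlip.continuous
  have hgcont : ContinuousOn g (Set.Icc 0 T) :=
    by have := hFcont.comp_continuousOn (hYcont.prodMk hwcont); exact this
  -- integrability and FTC on subintervals
  have hint : ∀ a ∈ Set.Icc (0:ℝ) T, ∀ b ∈ Set.Icc (0:ℝ) T,
      IntervalIntegrable g MeasureTheory.volume a b := by
    intro a ha b hb
    apply ContinuousOn.intervalIntegrable
    exact hgcont.mono (Set.uIcc_subset_Icc ha hb)
  have hFTC : ∀ a ∈ Set.Icc (0:ℝ) T, ∀ b ∈ Set.Icc (0:ℝ) T, a ≤ b →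
      Y b - Y a = ∫ s in a..b, g s := by
    intro a ha b hb hab
    rw [intervalIntegral.integral_eq_sub_of_hasDerivAt]
    · intro s hs
      rw [Set.uIcc_of_le hab] at hs
      exact hYode s ⟨ha.1.trans hs.1, hs.2.trans hb.2⟩
    · exact hint a ha b hb
  -- growth bound for Y
  have hgrow : ∀ a ∈ Set.Icc (0:ℝ) T, ∀ b ∈ Set.Icc (0:ℝ) T, a ≤ b →
      |Y b - Y a| ≤ D * (b - a) := by
    intro a ha b hb hab
    rw [hFTC a ha b hb hab]
    have h2 := intervalIntegral.norm_integral_le_of_norm_le_const (a := a) (b := b) (C := D)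
      (f := g) (fun x _ => by rw [Real.norm_eq_abs]; exact hfD _ _)
    have h3 : |b - a| = b - a := abs_of_nonneg (by linarith)
    rw [Real.norm_eq_abs, h3] at h2
    exact h2
  -- the one-step estimate
  have hstep : ∀ k : ℕ, k < m → ∀ t' : ℝ, (k:ℝ)*r ≤ t' → t' ≤ ((k:ℝ)+1)*r →
      |Y t' - Yh t'| ≤ (1 + Z₁*r) * |Y ((k:ℝ)*r) - Yh ((k:ℝ)*r)| + r * δ := by
    intro k hk t' ht1 ht2
    set a : ℝ := (k:ℝ)*r with ha_def
    set c : ℝ := f' (Yh a) (w a) with hc_def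
    have hk' : (k:ℝ) + 1 ≤ m := by exact_mod_cast Nat.succ_le_of_lt hk
    have ha0 : 0 ≤ a := by positivity
    have hbT : ((k:ℝ)+1)*r ≤ T := by
      rw [← hmr]
      exact mul_le_mul_of_nonneg_right hk' hr.le
    have haI : a ∈ Set.Icc (0:ℝ) T := ⟨ha0, le_trans (le_trans (by nlinarith) ht2) hbT⟩
    have ht'I : t' ∈ Set.Icc (0:ℝ) T := ⟨ha0.trans ht1, ht2.trans hbT⟩
    have hYh_t' : Yh t' = Yh a + (t' - a) * c := by
      rcases lt_or_eq_of_le ht2 with h | h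
      · exact hYhinterp k hk t' ht1 h
      · rw [h, hYhstep k hk]
        have : ((k:ℝ)+1)*r - a = r := by rw [ha_def]; ring
        rw [this]
    have hYdiff : Y t' - Y a = ∫ s in a..t', g s := hFTC a haI t' ht'I ht1
    have hconst : (∫ _ in a..t', c) = (t' - a) * c := by
      rw [intervalIntegral.integral_const, smul_eq_mul]
    have hintg : IntervalIntegrable g MeasureTheory.volume a t' := hint a haI t' ht'I
    have hintc : IntervalIntegrable (fun _ => c) MeasureTheory.volume a t' :=
      intervalIntegrable_const
    have key : Y t' - Yh t' = (Y a - Yh a) + ∫ s in a..t', (g s - c) := by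
      rw [intervalIntegral.integral_sub hintg hintc, hconst, ← hYdiff, hYh_t']
      ring
    have hbnd : ∀ s ∈ Set.uIoc a t', ‖g s - c‖ ≤ Z₁ * |Y a - Yh a| + δ := by
      intro s hs
      rw [Set.uIoc_of_le ht1] at hs
      have hsI : s ∈ Set.Icc (0:ℝ) T := ⟨ha0.trans hs.1.le, hs.2.trans ht'I.2⟩
      have hsa : s - a ≤ r := by
        have : s ≤ ((k:ℝ)+1)*r := hs.2.trans ht2
        rw [ha_def]; nlinarith
      have e1 : |f (Y s) (w s) - f (Yh a) (w s)| ≤ Z₁ * (D * (s - a) + |Y a - Yh a|) := by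
        refine (hfLx _ _ _).trans (mul_le_mul_of_nonneg_left ?_ hZ₁)
        calc |Y s - Yh a| ≤ |Y s - Y a| + |Y a - Yh a| := abs_sub_le _ _ _
          _ ≤ D * (s - a) + |Y a - Yh a| := by
              have := hgrow a haI s hsI hs.1.le
              linarith
      have e2 : |f (Yh a) (w s) - f (Yh a) (w a)| ≤ Z₂ * (L * (s - a)) := by
        refine (hfLy _ _ _).trans ?_
        have := hw s hsI a haI
        rw [abs_of_nonneg (by linarith [hs.1.le] : (0:ℝ) ≤ s - a)] at this
        exact mul_le_mul_of_nonneg_left this hZ₂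
      have e3 : |f (Yh a) (w a) - f' (Yh a) (w a)| ≤ E := hff' _ _
      have htri : |g s - c| ≤ |f (Y s) (w s) - f (Yh a) (w s)|
          + |f (Yh a) (w s) - f (Yh a) (w a)| + |f (Yh a) (w a) - f' (Yh a) (w a)| := by
        rw [hg_def, hc_def]
        calc |f (Y s) (w s) - f' (Yh a) (w a)|
            ≤ |f (Y s) (w s) - f (Yh a) (w a)| + |f (Yh a) (w a) - f' (Yh a) (w a)| :=
              abs_sub_le _ _ _
          _ ≤ _ := by
              have := abs_sub_le (f (Y s) (w s)) (f (Yh a) (w s)) (f (Yh a) (w a))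
              linarith
      rw [Real.norm_eq_abs]
      have hsa0 : 0 ≤ s - a := by linarith [hs.1.le]
      have h1 : Z₁ * (D * (s - a)) ≤ Z₁ * (D * r) :=
        mul_le_mul_of_nonneg_left (mul_le_mul_of_nonneg_left hsa hD) hZ₁
      have h2 : Z₂ * (L * (s - a)) ≤ Z₂ * (L * r) :=
        mul_le_mul_of_nonneg_left (mul_le_mul_of_nonneg_left hsa hL) hZ₂
      have e1' : |f (Y s) (w s) - f (Yh a) (w s)|
          ≤ Z₁ * (D * (s - a)) + Z₁ * |Y a - Yh a| := by
        have h4 : Z₁ * (D * (s - a) + |Y a - Yh a|)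
            = Z₁ * (D * (s - a)) + Z₁ * |Y a - Yh a| := by ring
        linarith [e1, h4.le]
      rw [hδ_def]
      have h5 : Z₁ * (D * r) = Z₁ * D * r := by ring
      have h6 : Z₂ * (L * r) = Z₂ * L * r := by ring
      linarith
    have hi := intervalIntegral.norm_integral_le_of_norm_le_const
      (f := fun s => g s - c) hbnd
    rw [Real.norm_eq_abs, abs_of_nonneg (by linarith : (0:ℝ) ≤ t' - a)] at hi
    have habs : |Y t' - Yh t'| ≤ |Y a - Yh a| + |∫ s in a..t', (g s - c)| := by
      rw [key]; exact abs_add_le _ _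
    have hta : t' - a ≤ r := by rw [ha_def]; nlinarith
    have hZe : 0 ≤ Z₁ * |Y a - Yh a| + δ := by positivity
    have h7 : |∫ s in a..t', (g s - c)| ≤ (Z₁ * |Y a - Yh a| + δ) * r :=
      hi.trans (mul_le_mul_of_nonneg_left hta hZe)
    have h8 : (Z₁ * |Y a - Yh a| + δ) * r
        = Z₁ * r * |Y a - Yh a| + r * δ := by ring
    have h9 : (1 + Z₁ * r) * |Y a - Yh a|
        = |Y a - Yh a| + Z₁ * r * |Y a - Yh a| := by ring
    linarith
  -- discrete Grönwall induction at grid points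
  have hbase : (1:ℝ) ≤ 1 + Z₁ * r := by nlinarith
  have hind : ∀ k : ℕ, k ≤ m →
      |Y ((k:ℝ)*r) - Yh ((k:ℝ)*r)| ≤ δ * r * k * (1 + Z₁*r)^k := by
    intro k
    induction k with
    | zero => intro _; simp [hY0, hYh0]
    | succ k ih =>
      intro hk
      have hk' : k < m := Nat.lt_of_succ_le hk
      have ihk := ih hk'.le
      have hone : (1:ℝ) ≤ (1 + Z₁*r)^(k+1) := one_le_pow₀ hbase
      have hs := hstep k hk' (((k:ℝ)+1)*r) (by nlinarith) le_rfl
      have hcast : ((k+1 : ℕ) : ℝ) = (k:ℝ) + 1 := by push_cast; ring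
      rw [hcast]
      calc |Y (((k:ℝ)+1)*r) - Yh (((k:ℝ)+1)*r)|
          ≤ (1 + Z₁*r) * |Y ((k:ℝ)*r) - Yh ((k:ℝ)*r)| + r * δ := hs
        _ ≤ (1 + Z₁*r) * (δ * r * k * (1 + Z₁*r)^k) + r * δ := by
            have := mul_le_mul_of_nonneg_left ihk (by linarith : (0:ℝ) ≤ 1 + Z₁*r)
            linarith
        _ = δ * r * k * (1 + Z₁*r)^(k+1) + r * δ := by ring
        _ ≤ δ * r * k * (1 + Z₁*r)^(k+1) + r * δ * (1 + Z₁*r)^(k+1) := by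
            have h10 : r * δ * 1 ≤ r * δ * (1 + Z₁*r)^(k+1) :=
              mul_le_mul_of_nonneg_left hone (mul_nonneg hr.le hδ)
            linarith
        _ = δ * r * ((k:ℝ)+1) * (1 + Z₁*r)^(k+1) := by ring
  -- choose the grid interval containing t
  obtain ⟨k, hkm, hk1, hk2⟩ : ∃ k : ℕ, k < m ∧ (k:ℝ)*r ≤ t ∧ t ≤ ((k:ℝ)+1)*r := by
    refine ⟨min (⌊t/r⌋₊) (m-1), lt_of_le_of_lt (min_le_right _ _) (Nat.sub_lt hm one_pos),
      ?_, ?_⟩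
    · have h1 : ((min (⌊t/r⌋₊) (m-1) : ℕ) : ℝ) ≤ (⌊t/r⌋₊ : ℝ) := by
        exact_mod_cast Nat.cast_le.mpr (min_le_left _ _)
      have h2 : (⌊t/r⌋₊ : ℝ) ≤ t / r := Nat.floor_le (div_nonneg ht.1 hr.le)
      calc ((min (⌊t/r⌋₊) (m-1) : ℕ) : ℝ) * r ≤ (t/r) * r := by
            apply mul_le_mul_of_nonneg_right (h1.trans h2) hr.le
        _ = t := by field_simp
    · rcases le_or_gt (⌊t/r⌋₊) (m-1) with h | h
      · rw [min_eq_left h]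
        have := Nat.lt_floor_add_one (t/r)
        have h3 : t / r < (⌊t/r⌋₊ : ℝ) + 1 := by exact_mod_cast this
        have := mul_lt_mul_of_pos_right h3 hr
        rw [div_mul_cancel₀ t hr.ne'] at this
        linarith
      · rw [min_eq_right h.le]
        have hcast : ((m - 1 : ℕ) : ℝ) + 1 = (m : ℝ) := by
          have : m - 1 + 1 = m := Nat.succ_pred_eq_of_pos hm
          exact_mod_cast congrArg (Nat.cast (R := ℝ)) this
        rw [hcast, hmr]
        exact ht.2
  -- conclude
  have hfin := hstep k hkm t hk1 hk2
  have hik := hind k hkm.le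
  have honek : (1:ℝ) ≤ (1 + Z₁*r)^k := one_le_pow₀ hbase
  have hcomb : |Y t - Yh t| ≤ δ * r * ((k:ℝ)+1) * (1 + Z₁*r)^(k+1) := by
    calc |Y t - Yh t| ≤ (1 + Z₁*r) * |Y ((k:ℝ)*r) - Yh ((k:ℝ)*r)| + r * δ := hfin
      _ ≤ (1 + Z₁*r) * (δ * r * k * (1 + Z₁*r)^k) + r * δ := by
          have := mul_le_mul_of_nonneg_left hik (by linarith : (0:ℝ) ≤ 1 + Z₁*r)
          linarith
      _ = δ * r * k * (1 + Z₁*r)^(k+1) + r * δ := by ring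
      _ ≤ δ * r * k * (1 + Z₁*r)^(k+1) + r * δ * (1 + Z₁*r)^(k+1) := by
          have honek1 : (1:ℝ) ≤ (1 + Z₁*r)^(k+1) := one_le_pow₀ hbase
          have h10 : r * δ * 1 ≤ r * δ * (1 + Z₁*r)^(k+1) :=
            mul_le_mul_of_nonneg_left honek1 (mul_nonneg hr.le hδ)
          linarith
      _ = δ * r * ((k:ℝ)+1) * (1 + Z₁*r)^(k+1) := by ring
  have hk1m : ((k:ℝ)+1) ≤ (m:ℝ) := by exact_mod_cast Nat.succ_le_of_lt hkm
  have hpowmono : (1 + Z₁*r)^(k+1) ≤ (1 + Z₁*r)^m :=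
    pow_le_pow_right₀ (by linarith) (Nat.succ_le_of_lt hkm)
  have hpowexp : (1 + Z₁*r)^m ≤ Real.exp (Z₁ * T) := by
    have h1 : 1 + Z₁*r ≤ Real.exp (Z₁*r) := by
      have := Real.add_one_le_exp (Z₁*r)
      linarith
    calc (1 + Z₁*r)^m ≤ (Real.exp (Z₁*r))^m :=
          pow_le_pow_left₀ (by linarith) h1 m
      _ = Real.exp ((m:ℝ) * (Z₁*r)) := by rw [← Real.exp_nat_mul]
      _ = Real.exp (Z₁ * T) := by rw [← hmr]; ring_nf
  have hstep2 : δ * r * ((k:ℝ)+1) * (1 + Z₁*r)^(k+1) ≤ δ * r * (m:ℝ) * (1 + Z₁*r)^m := by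
    have hp0 : (0:ℝ) ≤ (1 + Z₁*r)^(k+1) := by positivity
    have h1 : δ * r * ((k:ℝ)+1) ≤ δ * r * (m:ℝ) :=
      mul_le_mul_of_nonneg_left hk1m (mul_nonneg hδ hr.le)
    exact mul_le_mul h1 hpowmono hp0 (by positivity)
  have hfinal : δ * r * (m:ℝ) * (1 + Z₁*r)^m ≤ δ * T * Real.exp (Z₁ * T) := by
    have h1 : δ * r * (m:ℝ) = δ * T := by rw [← hmr]; ring
    rw [h1]
    exact mul_le_mul_of_nonneg_left hpowexp (by positivity)
  calc |Y t - Yh t| ≤ δ * r * ((k:ℝ)+1) * (1 + Z₁*r)^(k+1) := hcomb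
    _ ≤ δ * r * (m:ℝ) * (1 + Z₁*r)^m := hstep2
    _ ≤ δ * T * Real.exp (Z₁ * T) := hfinal
end

section
/- Let h : ℝ → ℝ → ℝ satisfy h(x,0) = x and, for each x, the map y ↦ h(x,y) is differentiable with derivative arctan(h(x,y)). Then for all x < 0 and y < 0, exp(−∫₀^y (1/(1 + h(x,s)²)) ds) ≥ exp(|y|/(1 + x²)). (Equivalently, the reciprocal of ∂h/∂x(x,y) = exp(∫₀^y (1/(1+h(x,s)²)) ds) is at least exp(|y|/(1+x²)), so it is unbounded in (x,y).) -/
/-- For the flow `h` of `σ(u) = arctan u`, the reciprocal of `∂h/∂x`, namely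
`exp(−∫₀^y (1/(1+h(x,s)²)) ds)`, is at least `exp(|y|/(1+x²))` for `x < 0`, `y < 0`. -/
theorem arctan_flow_inv_unbounded
    (h : ℝ → ℝ → ℝ)
    (hh0 : ∀ x, h x 0 = x)
    (hhy : ∀ x y, HasDerivAt (fun y => h x y) (Real.arctan (h x y)) y) :
    ∀ x < (0 : ℝ), ∀ y < (0 : ℝ),
      Real.exp (-∫ s in (0:ℝ)..y, 1 / (1 + (h x s) ^ 2)) ≥
        Real.exp (|y| / (1 + x ^ 2)) := by
  intro x hx y hy
  have hcont : Continuous (fun s => h x s) :=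
    continuous_iff_continuousAt.mpr fun s => (hhy x s).differentiableAt.continuousAt
  have hsq : ∀ s, HasDerivAt (fun s => (h x s) ^ 2)
      (2 * h x s * Real.arctan (h x s)) s := by
    intro s
    have := (hhy x s).fun_pow 2
    simpa [pow_one, mul_comm, mul_assoc, mul_left_comm] using this
  have hmono : Monotone (fun s => (h x s) ^ 2) := by
    apply monotone_of_deriv_nonneg
    · exact fun s => (hsq s).differentiableAt
    · intro s
      rw [(hsq s).deriv]
      have : 0 ≤ h x s * Real.arctan (h x s) := by
        rcases le_or_gt 0 (h x s) with h0 | h0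
        · have : 0 ≤ Real.arctan (h x s) := by
            rw [← Real.arctan_zero]
            exact Real.arctan_strictMono.monotone h0
          exact mul_nonneg h0 this
        · have : Real.arctan (h x s) ≤ 0 := by
            rw [← Real.arctan_zero]
            exact Real.arctan_strictMono.monotone h0.le
          nlinarith
      linarith
  have hbound : ∀ s ∈ Set.Icc y 0, (h x s) ^ 2 ≤ x ^ 2 := by
    intro s hs
    have := hmono hs.2
    simpa [hh0 x] using this
  have hI : ∫ s in y..0, (1:ℝ) / (1 + x ^ 2) ≤ ∫ s in y..0, 1 / (1 + (h x s) ^ 2) := by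
    apply intervalIntegral.integral_mono_on hy.le
    · exact intervalIntegrable_const
    · apply Continuous.intervalIntegrable
      exact continuous_const.div (by continuity) (fun s => by positivity)
    · intro s hs
      have h1 : (0:ℝ) < 1 + (h x s) ^ 2 := by positivity
      exact one_div_le_one_div_of_le h1 (by linarith [hbound s hs])
  have hconst : ∫ s in y..0, (1:ℝ) / (1 + x ^ 2) = |y| / (1 + x ^ 2) := by
    rw [intervalIntegral.integral_const, abs_of_neg hy]
    simp [smul_eq_mul]
    ring
  have hflip : -∫ s in (0:ℝ)..y, 1 / (1 + (h x s) ^ 2)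
      = ∫ s in y..0, 1 / (1 + (h x s) ^ 2) := by
    rw [intervalIntegral.integral_symm]
    ring
  rw [ge_iff_le, Real.exp_le_exp, hflip, ← hconst]
  exact hI
end

section
/- Let 0 < H < 1/2, a < 0 and 0 ≤ t₁ ≤ t₂. Then ∫_{1/a}^0 ( ∫_{1/a}^s (1/2 − H) [ (t₁ − 1/v)^{H−3/2} − (t₂ − 1/v)^{H−3/2} ] (−1/v)³ dv ) ds ≤ (3/2 − H) (−1/a)^{3/2−H} (t₂ − t₁). -/
open MeasureTheory Set intervalIntegral

/-- MVT consequence: for `p < 0`, `0 < u ≤ w`, `u^p - w^p ≤ (-p) u^(p-1) (w-u)`. -/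
lemma aux_rpow_sub_rpow_le {p u w : ℝ} (hp : p < 0) (hu : 0 < u) (huw : u ≤ w) :
    u ^ p - w ^ p ≤ (-p) * u ^ (p - 1) * (w - u) := by
  rcases eq_or_lt_of_le huw with rfl | h
  · simp
  · have hw : 0 < w := hu.trans h
    obtain ⟨ξ, hξ, hslope⟩ := exists_hasDerivAt_eq_slope (fun x => x ^ p)
      (fun x => p * x ^ (p - 1)) h
      (ContinuousOn.rpow_const continuousOn_id fun x hx =>
        Or.inl (ne_of_gt (lt_of_lt_of_le hu hx.1)))
      (fun x hx => Real.hasDerivAt_rpow_const (Or.inl (ne_of_gt (hu.trans hx.1))))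
    have hξu : u < ξ := hξ.1
    have heq : p * ξ ^ (p - 1) * (w - u) = w ^ p - u ^ p := by
      rw [hslope, div_mul_cancel₀ _ (by linarith : w - u ≠ 0)]
    have hle : ξ ^ (p - 1) ≤ u ^ (p - 1) :=
      Real.rpow_le_rpow_of_nonpos hu hξu.le (by linarith)
    have hmul := mul_le_mul_of_nonneg_right
      (mul_le_mul_of_nonneg_left hle (by linarith : (0:ℝ) ≤ -p))
      (by linarith : (0:ℝ) ≤ w - u)
    nlinarith [hmul]

set_option maxHeartbeats 1000000 in
/-- Double-integral kernel estimate for `H < 1/2`: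
`∫_{1/a}^0 (∫_{1/a}^s (1/2−H)[(t₁−1/v)^{H−3/2} − (t₂−1/v)^{H−3/2}](−1/v)³ dv) ds
  ≤ (3/2−H)(−1/a)^{3/2−H}(t₂ − t₁)`. -/
theorem kernel_double_integral_H_small
    (H a t₁ t₂ : ℝ) (hH0 : 0 < H) (hH : H < 1 / 2) (ha : a < 0)
    (ht₁ : 0 ≤ t₁) (ht : t₁ ≤ t₂) :
    (∫ s in (1 / a)..(0:ℝ), ∫ v in (1 / a)..s,
        (1 / 2 - H) * ((t₁ - 1 / v) ^ (H - 3 / 2) - (t₂ - 1 / v) ^ (H - 3 / 2)) *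
          (-(1 / v)) ^ (3 : ℕ)) ≤
      (3 / 2 - H) * (-(1 / a)) ^ (3 / 2 - H) * (t₂ - t₁) := by
  have hb : 1 / a < 0 := one_div_neg.mpr ha
  set b : ℝ := 1 / a with hbdef
  set c : ℝ := (1 / 2 - H) * (3 / 2 - H) * (t₂ - t₁) with hcdef
  have hc : 0 ≤ c :=
    mul_nonneg (mul_nonneg (by linarith) (by linarith)) (by linarith)
  set g : ℝ → ℝ := fun v =>
    (1 / 2 - H) * ((t₁ - 1 / v) ^ (H - 3 / 2) - (t₂ - 1 / v) ^ (H - 3 / 2)) *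
      (-(1 / v)) ^ (3 : ℕ) with hgdef
  set bound : ℝ → ℝ := fun v => c * (-v) ^ (-H - 1 / 2) with hbounddef
  -- pointwise nonnegativity
  have hg_nonneg : ∀ v ∈ Icc b (0:ℝ), 0 ≤ g v := by
    intro v hv
    rcases eq_or_lt_of_le hv.2 with rfl | hv0
    · simp [hgdef]
    · have hx : 1 / v < 0 := one_div_neg.mpr hv0
      have h1 : 0 < t₁ - 1 / v := by linarith
      have h2 : t₁ - 1 / v ≤ t₂ - 1 / v := by linarith
      have hd : (t₂ - 1 / v) ^ (H - 3 / 2) ≤ (t₁ - 1 / v) ^ (H - 3 / 2) :=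
        Real.rpow_le_rpow_of_nonpos h1 h2 (by linarith)
      have hnx : (0:ℝ) ≤ -(1 / v) := by linarith
      exact mul_nonneg (mul_nonneg (by linarith) (by linarith)) (by positivity)
  -- pointwise bound
  have hg_le : ∀ v ∈ Icc b (0:ℝ), g v ≤ bound v := by
    intro v hv
    rcases eq_or_lt_of_le hv.2 with rfl | hv0
    · simp only [hgdef, hbounddef]
      rw [div_zero, neg_zero,
        Real.zero_rpow (ne_of_lt (show -H - 1/2 < (0:ℝ) by linarith))]
      norm_num
    · have hx : 1 / v < 0 := one_div_neg.mpr hv0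
      have hnx : 0 < -(1 / v) := by linarith
      have h1 : 0 < t₁ - 1 / v := by linarith
      have h2 : t₁ - 1 / v ≤ t₂ - 1 / v := by linarith
      have key : (t₁ - 1 / v) ^ (H - 3 / 2) - (t₂ - 1 / v) ^ (H - 3 / 2) ≤
          (3 / 2 - H) * (t₂ - t₁) * (-(1 / v)) ^ (H - 3 / 2 - 1) := by
        have h3 := aux_rpow_sub_rpow_le (p := H - 3/2) (by linarith) h1 h2
        have h4 : (t₁ - 1 / v) ^ (H - 3 / 2 - 1) ≤ (-(1 / v)) ^ (H - 3 / 2 - 1) :=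
          Real.rpow_le_rpow_of_nonpos hnx (by linarith) (by linarith)
        calc (t₁ - 1 / v) ^ (H - 3 / 2) - (t₂ - 1 / v) ^ (H - 3 / 2)
            ≤ (-(H - 3/2)) * (t₁ - 1 / v) ^ (H - 3 / 2 - 1) * ((t₂ - 1/v) - (t₁ - 1/v)) := h3
          _ ≤ (3 / 2 - H) * (t₂ - t₁) * (-(1 / v)) ^ (H - 3 / 2 - 1) := by
              have h6 : (t₂ - 1/v) - (t₁ - 1/v) = t₂ - t₁ := by ring
              rw [h6]
              have h7 := mul_le_mul_of_nonneg_left h4 (show (0:ℝ) ≤ 3/2 - H by linarith)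
              nlinarith [Real.rpow_nonneg h1.le (H - 3/2 - 1)]
      have hmul : g v ≤ (1/2 - H) * ((3 / 2 - H) * (t₂ - t₁) *
          (-(1 / v)) ^ (H - 3 / 2 - 1)) * (-(1 / v)) ^ (3 : ℕ) := by
        have hp3 : (0:ℝ) ≤ (-(1/v)) ^ (3:ℕ) := by positivity
        exact mul_le_mul_of_nonneg_right
          (mul_le_mul_of_nonneg_left key (by linarith)) hp3
      refine hmul.trans_eq ?_
      have hpow : (-(1 / v)) ^ (3 : ℕ) = (-(1 / v)) ^ ((3:ℕ) : ℝ) :=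
        (Real.rpow_natCast _ 3).symm
      have hcomb : (-(1 / v)) ^ (H - 3 / 2 - 1) * (-(1 / v)) ^ ((3:ℕ) : ℝ)
          = (-(1 / v)) ^ (H + 1 / 2) := by
        rw [← Real.rpow_add hnx]
        congr 1
        push_cast; ring
      have hinv : (-(1 / v)) ^ (H + 1 / 2) = (-v) ^ (-H - 1 / 2) := by
        have hiv : -(1 / v) = (-v)⁻¹ := by rw [one_div, inv_neg]
        rw [hiv, Real.inv_rpow (by linarith), ← Real.rpow_neg (by linarith)]
        congr 1; ring
      calc (1/2 - H) * ((3 / 2 - H) * (t₂ - t₁) * (-(1 / v)) ^ (H - 3 / 2 - 1))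
            * (-(1 / v)) ^ (3 : ℕ)
          = c * ((-(1 / v)) ^ (H - 3 / 2 - 1) * (-(1 / v)) ^ ((3:ℕ):ℝ)) := by
            rw [← hpow]; ring
        _ = c * (-v) ^ (-H - 1 / 2) := by rw [hcomb, hinv]
  -- integrability of the bound
  have hbound_int : IntervalIntegrable bound volume b 0 := by
    have h1 : IntervalIntegrable (fun x : ℝ => x ^ (-H - 1/2)) volume (-b) (-0) :=
      intervalIntegrable_rpow' (by linarith)
    have h2 := (IntervalIntegrable.iff_comp_neg (by simp)).mp h1
    simp only [neg_neg] at h2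
    exact h2.const_mul c
  -- measurability of g on (b,0)
  have hg_meas : AEStronglyMeasurable g (volume.restrict (Ioc b (0:ℝ))) := by
    have hco : ContinuousOn g (Ioo b 0) := by
      have hinv : ContinuousOn (fun v : ℝ => 1 / v) (Ioo b (0:ℝ)) :=
        continuousOn_const.div continuousOn_id (fun v hv => ne_of_lt hv.2)
      have h1 : ContinuousOn (fun v : ℝ => (t₁ - 1 / v) ^ (H - 3/2)) (Ioo b 0) := by
        apply (continuousOn_const.sub hinv).rpow_const
        intro v hv
        have hx : 1 / v < 0 := one_div_neg.mpr hv.2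
        exact Or.inl (by intro h; simp only [Pi.sub_apply, sub_eq_zero] at h; linarith)
      have h2 : ContinuousOn (fun v : ℝ => (t₂ - 1 / v) ^ (H - 3/2)) (Ioo b 0) := by
        apply (continuousOn_const.sub hinv).rpow_const
        intro v hv
        have hx : 1 / v < 0 := one_div_neg.mpr hv.2
        exact Or.inl (by intro h; simp only [Pi.sub_apply, sub_eq_zero] at h; linarith)
      exact (continuousOn_const.mul (h1.sub h2)).mul (hinv.neg.pow 3)
    have := hco.aestronglyMeasurable (μ := volume) measurableSet_Ioo
    rwa [Measure.restrict_congr_set Ioo_ae_eq_Ioc] at this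
  -- integrability of g on [b, 0]
  have hg_int : IntervalIntegrable g volume b 0 := by
    apply IntervalIntegrable.mono_fun' hbound_int
    · rwa [uIoc_of_le hb.le]
    · rw [Filter.EventuallyLE, ae_restrict_iff' measurableSet_uIoc]
      apply Filter.Eventually.of_forall
      intro v hv
      have hv' : v ∈ Icc b 0 := by
        rw [uIoc_of_le hb.le] at hv; exact ⟨hv.1.le, hv.2⟩
      rw [Real.norm_eq_abs, abs_of_nonneg (hg_nonneg v hv')]
      exact hg_le v hv'
  -- value of the bound integral
  set M : ℝ := c * (-b) ^ (-H - 1/2 + 1) / (-H - 1/2 + 1) with hMdef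
  have hM : (∫ v in b..(0:ℝ), bound v) = M := by
    have h1 : (∫ v in b..(0:ℝ), bound v) = c * ∫ v in b..(0:ℝ), (-v) ^ (-H - 1/2) := by
      simp only [hbounddef]
      rw [intervalIntegral.integral_const_mul]
    rw [h1]
    have h2 : (∫ v in b..(0:ℝ), (-v) ^ (-H - 1/2))
        = ∫ x in (-0:ℝ)..(-b), x ^ (-H - 1/2) :=
      intervalIntegral.integral_comp_neg (fun x => x ^ (-H - 1/2))
    rw [h2, neg_zero, integral_rpow (Or.inl (by linarith)),
      Real.zero_rpow (ne_of_gt (show (0:ℝ) < -H - 1/2 + 1 by linarith)), sub_zero, hMdef]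
    ring
  -- bound on the inner integral
  have hF_bound : ∀ s ∈ Set.uIoc b (0:ℝ), ‖∫ v in b..s, g v‖ ≤ M := by
    intro s hs
    rw [uIoc_of_le hb.le] at hs
    have hs1 : b ≤ s := hs.1.le
    have hsub : uIcc b s ⊆ uIcc b 0 := by
      rw [uIcc_of_le hs1, uIcc_of_le hb.le]
      exact Icc_subset_Icc le_rfl hs.2
    have hgs : IntervalIntegrable g volume b s := hg_int.mono_set hsub
    have hbs : IntervalIntegrable bound volume b s := hbound_int.mono_set hsub
    have h0 : 0 ≤ ∫ v in b..s, g v :=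
      intervalIntegral.integral_nonneg hs1
        (fun u hu => hg_nonneg u ⟨hu.1, hu.2.trans hs.2⟩)
    rw [Real.norm_eq_abs, abs_of_nonneg h0]
    calc (∫ v in b..s, g v) ≤ ∫ v in b..s, bound v :=
          intervalIntegral.integral_mono_on hs1 hgs hbs
            (fun u hu => hg_le u ⟨hu.1, hu.2.trans hs.2⟩)
      _ ≤ ∫ v in b..0, bound v := by
          apply intervalIntegral.integral_mono_interval le_rfl hs1 hs.2 ?_ hbound_int
          filter_upwards [ae_restrict_mem measurableSet_Ioc] with v hv
          exact mul_nonneg hc (Real.rpow_nonneg (by linarith [hv.2]) _)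
      _ = M := hM
  -- conclude
  have hnorm := intervalIntegral.norm_integral_le_of_norm_le_const hF_bound
  have habs : |(0:ℝ) - b| = -b := by
    rw [zero_sub, abs_of_nonneg (by linarith : (0:ℝ) ≤ -b)]
  calc (∫ s in b..(0:ℝ), ∫ v in b..s, g v)
      ≤ ‖∫ s in b..(0:ℝ), ∫ v in b..s, g v‖ := le_abs_self _
    _ ≤ M * |0 - b| := hnorm
    _ = (3 / 2 - H) * (-b) ^ (3 / 2 - H) * (t₂ - t₁) := by
        rw [habs, hMdef, hcdef]
        have hposb : (0:ℝ) < -b := by linarith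
        have he : -H - 1/2 + 1 = 1/2 - H := by ring
        have hne : (1/2 - H : ℝ) ≠ 0 := ne_of_gt (by linarith)
        rw [he]
        have hpow : (-b) ^ ((3:ℝ)/2 - H) = (-b) ^ ((1:ℝ)/2 - H) * (-b) := by
          rw [show (3/2 - H : ℝ) = (1/2 - H) + 1 by ring, Real.rpow_add hposb,
            Real.rpow_one]
        rw [hpow]
        rw [show (1/2 - H) * (3/2 - H) * (t₂ - t₁) * (-b) ^ ((1:ℝ)/2 - H)
            = (1/2 - H) * ((3/2 - H) * (t₂ - t₁) * (-b) ^ ((1:ℝ)/2 - H)) from by ring,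
          mul_div_cancel_left₀ _ hne]
        ring
end

section
/- Let 0 < H < 1/2, a < ε < 0 and 0 ≤ t₁ ≤ t₂. Then ∫_a^{ε} [ (t₁ − s)^{H−1/2} − (t₂ − s)^{H−1/2} ] ds ≤ (−ε)^{H−1/2} (t₂ − t₁). (Note the integrand is nonnegative since H − 1/2 < 0 and t₁ ≤ t₂.) -/
/-- Truncated kernel estimate for `H < 1/2`, `a < ε < 0`:
`∫_a^ε [(t₁−s)^{H−1/2} − (t₂−s)^{H−1/2}] ds ≤ (−ε)^{H−1/2}(t₂ − t₁)`. -/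
theorem truncated_kernel_estimate_H_small
    (H a ε t₁ t₂ : ℝ) (hH0 : 0 < H) (hH : H < 1 / 2)
    (ha : a < ε) (hε : ε < 0)
    (ht₁ : 0 ≤ t₁) (ht : t₁ ≤ t₂) :
    (∫ s in a..ε, ((t₁ - s) ^ (H - 1 / 2) - (t₂ - s) ^ (H - 1 / 2))) ≤
      (-ε) ^ (H - 1 / 2) * (t₂ - t₁) := by
  set p : ℝ := H - 1 / 2 with hpdef
  have hp0 : p < 0 := by simp only [hpdef]; linarith
  have hε' : (0:ℝ) < -ε := by linarith
  have ht₂ : 0 ≤ t₂ := ht₁.trans ht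
  -- integrability of u ↦ u ^ p on intervals with positive endpoints
  have intble : ∀ c d : ℝ, 0 < c → 0 < d →
      IntervalIntegrable (fun u : ℝ => u ^ p) MeasureTheory.volume c d := by
    intro c d hc hd
    apply ContinuousOn.intervalIntegrable
    apply ContinuousOn.rpow_const continuousOn_id
    intro x hx
    left
    simp only [id_eq]
    rcases Set.mem_uIcc.mp hx with h | h <;> intro h0 <;> linarith [h.1, h.2]
  -- integrability of the two kernel pieces
  have hInt : ∀ t : ℝ, 0 ≤ t →
      IntervalIntegrable (fun s : ℝ => (t - s) ^ p) MeasureTheory.volume a ε := by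
    intro t ht0
    apply ContinuousOn.intervalIntegrable
    apply ContinuousOn.rpow_const ((continuous_const.sub continuous_id).continuousOn)
    intro x hx
    left
    simp only [Pi.sub_apply, id_eq]
    rcases Set.mem_uIcc.mp hx with h | h <;> intro h0 <;> nlinarith [h.1, h.2]
  have key : ∀ t : ℝ, (∫ s in a..ε, (t - s) ^ p) = ∫ u in t - ε..t - a, u ^ p := by
    intro t
    simpa using (intervalIntegral.integral_comp_sub_left (a := a) (b := ε)
      (fun u : ℝ => u ^ p) t)
  rw [intervalIntegral.integral_sub (hInt t₁ ht₁) (hInt t₂ ht₂), key t₁, key t₂]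
  have h1ε : 0 < t₁ - ε := by linarith
  have h2ε : 0 < t₂ - ε := by linarith
  have h1a : 0 < t₁ - a := by linarith
  have h2a : 0 < t₂ - a := by linarith
  have split1 : (∫ u in t₁ - ε..t₁ - a, u ^ p) =
      (∫ u in t₁ - ε..t₂ - ε, u ^ p) + ∫ u in t₂ - ε..t₁ - a, u ^ p :=
    (intervalIntegral.integral_add_adjacent_intervals
      (intble _ _ h1ε h2ε) (intble _ _ h2ε h1a)).symm
  have split2 : (∫ u in t₂ - ε..t₂ - a, u ^ p) =
      (∫ u in t₂ - ε..t₁ - a, u ^ p) + ∫ u in t₁ - a..t₂ - a, u ^ p :=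
    (intervalIntegral.integral_add_adjacent_intervals
      (intble _ _ h2ε h1a) (intble _ _ h1a h2a)).symm
  rw [split1, split2]
  have hA : (∫ u in t₁ - ε..t₂ - ε, u ^ p) ≤ (-ε) ^ p * (t₂ - t₁) := by
    have hmono : (∫ u in t₁ - ε..t₂ - ε, u ^ p) ≤ ∫ _ in t₁ - ε..t₂ - ε, (-ε) ^ p := by
      apply intervalIntegral.integral_mono_on (by linarith) (intble _ _ h1ε h2ε)
        intervalIntegrable_const
      intro x hx
      exact Real.rpow_le_rpow_of_nonpos hε' (by linarith [hx.1]) hp0.le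
    calc (∫ u in t₁ - ε..t₂ - ε, u ^ p) ≤ ∫ _ in t₁ - ε..t₂ - ε, (-ε) ^ p := hmono
      _ = (-ε) ^ p * (t₂ - t₁) := by
        rw [intervalIntegral.integral_const, smul_eq_mul]; ring
  have hB : 0 ≤ ∫ u in t₁ - a..t₂ - a, u ^ p := by
    apply intervalIntegral.integral_nonneg (by linarith)
    intro x hx
    exact Real.rpow_nonneg (by linarith [hx.1]) p
  linarith
end
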